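/- arXiv:2306.00384 — 4 statements merged into one kernel-verified Lean document; each statement's English description precedes it below -/
import Mathlib

section
/- Let r ≥ 3, 0 < ε < 1, and 0 ≤ t ≤ ε·binom(n-3, r-2). For n sufficiently large, if F ⊆ binom([n], r) is intersecting with diversity d(F) = |F| - Δ(F) = binom(n-3, r-2) - t, then there exist three vertices x, y, z such that every edge of F contains at least two of {x,y,z}, and at most 3t edges can be added to F to obtain a family G with {E : |E ∩ {x,y,z}| = 2} ⊆ G ⊆ {E : |E ∩ {x,y,z}| ≥ 2}. -/
open Finset

def FamIntersecting (F : Finset (Finset ℕ)) : Prop :=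
  ∀ A ∈ F, ∀ B ∈ F, (A ∩ B).Nonempty

def maxDeg (F : Finset (Finset ℕ)) : ℕ :=
  (F.biUnion id).sup fun x => (F.filter fun E => x ∈ E).card

def IsFlower (α : ℝ) (S : Finset (Finset ℕ)) (Y : Finset ℕ) : Prop :=
  S.Nonempty ∧ (∀ A ∈ S, Y ⊆ A) ∧ (∀ x, (∀ A ∈ S, x ∈ A) → x ∈ Y) ∧
    ∀ T : Finset ℕ, (T.card : ℝ) ≤ α → ∃ A ∈ S, (A \ Y) ∩ T = ∅

def IsFlowerCore (α : ℝ) (F : Finset (Finset ℕ)) (Y : Finset ℕ) : Prop :=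
  Y.Nonempty ∧ ∃ S ⊆ F, IsFlower α S Y

open scoped Classical in
noncomputable def flowerBase (α : ℝ) (F : Finset (Finset ℕ)) : Finset (Finset ℕ) :=
  (F.biUnion Finset.powerset).filter fun B =>
    (IsFlowerCore α F B ∨ B ∈ F) ∧
    ∀ B', (IsFlowerCore α F B' ∨ B' ∈ F) → B' ⊆ B → B' = B

noncomputable def tau (F : Finset (Finset ℕ)) : ℕ :=
  sInf {k | ∃ T : Finset ℕ, T.card = k ∧ ∀ A ∈ F, (A ∩ T).Nonempty}


section Helpers

lemma tripleBound (n r : ℕ) (S : Finset (Finset ℕ))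
    (hS : S ⊆ (Finset.range n).powersetCard r) (a b c : ℕ) :
    (S.filter fun E => a ∈ E ∧ b ∈ E ∧ c ∈ E ∧ a ≠ b ∧ a ≠ c ∧ b ≠ c).card
      ≤ Nat.choose n (r - 3) := by
  classical
  by_cases hd : a ≠ b ∧ a ≠ c ∧ b ≠ c
  · obtain ⟨hab, hac, hbc⟩ := hd
    have hT3 : ({a, b, c} : Finset ℕ).card = 3 := by
      rw [card_insert_of_notMem (by simp [hab, hac]),
        card_insert_of_notMem (by simp [hbc]), card_singleton]
    have key : ∀ E ∈ S.filter fun E => a ∈ E ∧ b ∈ E ∧ c ∈ E ∧ a ≠ b ∧ a ≠ c ∧ b ≠ c,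
        ({a, b, c} : Finset ℕ) ⊆ E ∧ E ⊆ Finset.range n ∧ E.card = r := by
      intro E hE
      rw [mem_filter] at hE
      have h2 := mem_powersetCard.mp (hS hE.1)
      exact ⟨by simp [insert_subset_iff, hE.2.1, hE.2.2.1, hE.2.2.2.1], h2.1, h2.2⟩
    calc (S.filter fun E => a ∈ E ∧ b ∈ E ∧ c ∈ E ∧ a ≠ b ∧ a ≠ c ∧ b ≠ c).card
        ≤ ((Finset.range n).powersetCard (r - 3)).card := by
          apply Finset.card_le_card_of_injOn (fun E => E \ {a, b, c})
          · intro E hE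
            obtain ⟨hsub, hr1, hr2⟩ := key E hE
            rw [mem_coe, mem_powersetCard]
            exact ⟨(sdiff_subset).trans hr1, by rw [card_sdiff_of_subset hsub, hr2, hT3]⟩
          · intro E1 h1 E2 h2 heq
            have k1 := (key E1 (by simpa using h1)).1
            have k2 := (key E2 (by simpa using h2)).1
            dsimp only at heq
            have : E1 \ {a,b,c} ∪ {a,b,c} = E2 \ {a,b,c} ∪ {a,b,c} := by rw [heq]
            rwa [sdiff_union_of_subset k1, sdiff_union_of_subset k2] at this
      _ = Nat.choose n (r - 3) := by rw [card_powersetCard, card_range]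
  · have : (S.filter fun E => a ∈ E ∧ b ∈ E ∧ c ∈ E ∧ a ≠ b ∧ a ≠ c ∧ b ≠ c) = ∅ := by
      apply filter_false_of_mem; intro E _; tauto
    simp [this]

lemma pairBound (n r : ℕ) (S : Finset (Finset ℕ))
    (hS : S ⊆ (Finset.range n).powersetCard r) (a b c : ℕ)
    (hab : a ≠ b) (hac : a ≠ c) (hbc : b ≠ c)
    (han : a ∈ Finset.range n) (hbn : b ∈ Finset.range n) (hcn : c ∈ Finset.range n) :
    (S.filter fun E => a ∈ E ∧ b ∈ E ∧ c ∉ E).card ≤ Nat.choose (n - 3) (r - 2) := by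
  classical
  have hT3 : ({a, b, c} : Finset ℕ).card = 3 := by
    rw [card_insert_of_notMem (by simp [hab, hac]),
      card_insert_of_notMem (by simp [hbc]), card_singleton]
  have hT2 : ({a, b} : Finset ℕ).card = 2 := by
    rw [card_insert_of_notMem (by simp [hab]), card_singleton]
  have hTn : ({a, b, c} : Finset ℕ) ⊆ Finset.range n := by
    simp [insert_subset_iff, han, hbn, hcn]
  have key : ∀ E ∈ S.filter fun E => a ∈ E ∧ b ∈ E ∧ c ∉ E,
      ({a, b} : Finset ℕ) ⊆ E ∧ E ⊆ Finset.range n ∧ E.card = r ∧ c ∉ E := by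
    intro E hE
    rw [mem_filter] at hE
    have h2 := mem_powersetCard.mp (hS hE.1)
    exact ⟨by simp [insert_subset_iff, hE.2.1, hE.2.2.1], h2.1, h2.2, hE.2.2.2⟩
  calc (S.filter fun E => a ∈ E ∧ b ∈ E ∧ c ∉ E).card
      ≤ ((Finset.range n \ {a, b, c}).powersetCard (r - 2)).card := by
        apply Finset.card_le_card_of_injOn (fun E => E \ {a, b})
        · intro E hE
          obtain ⟨hsub, hr1, hr2, hc⟩ := key E hE
          rw [mem_coe, mem_powersetCard]
          constructor
          · intro x hx
            rw [mem_sdiff] at hx ⊢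
            refine ⟨hr1 hx.1, ?_⟩
            simp only [mem_insert, mem_singleton]
            push_neg
            have := hx.2
            simp only [mem_insert, mem_singleton] at this
            push_neg at this
            exact ⟨this.1, this.2, fun h => hc (h ▸ hx.1)⟩
          · rw [card_sdiff_of_subset hsub, hr2, hT2]
        · intro E1 h1 E2 h2 heq
          have k1 := (key E1 (by simpa using h1)).1
          have k2 := (key E2 (by simpa using h2)).1
          dsimp only at heq
          have : E1 \ {a,b} ∪ {a,b} = E2 \ {a,b} ∪ {a,b} := by rw [heq]
          rwa [sdiff_union_of_subset k1, sdiff_union_of_subset k2] at this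
    _ = Nat.choose (n - 3) (r - 2) := by
        rw [card_powersetCard, card_sdiff_of_subset hTn, card_range, hT3]

lemma interTripleCard (E : Finset ℕ) (a b c : ℕ) (hab : a ≠ b) (hac : a ≠ c) (hbc : b ≠ c) :
    (E ∩ ({a, b, c} : Finset ℕ)).card =
      (if a ∈ E then 1 else 0) + (if b ∈ E then 1 else 0) + (if c ∈ E then 1 else 0) := by
  classical
  rw [Finset.inter_comm, ← Finset.filter_mem_eq_inter]
  by_cases ha : a ∈ E <;> by_cases hb : b ∈ E <;> by_cases hc : c ∈ E <;>
    simp [Finset.filter_insert, ha, hb, hc, Finset.card_insert_of_notMem,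
      Finset.mem_insert, Finset.mem_filter, Finset.mem_singleton, Finset.filter_singleton, hab, hac, hbc]


lemma chooseDouble (m k : ℕ) (h : 2 * k ≤ m + 1) :
    Nat.choose (m + 1) k ≤ 2 * Nat.choose m k := by
  have hid := Nat.choose_mul_succ_eq m k
  have hpos : 0 < m + 1 - k := by omega
  have h2 : m + 1 ≤ 2 * (m + 1 - k) := by omega
  have : Nat.choose (m + 1) k * (m + 1 - k) ≤ (2 * Nat.choose m k) * (m + 1 - k) := by
    calc Nat.choose (m + 1) k * (m + 1 - k) = Nat.choose m k * (m + 1) := hid.symm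
      _ ≤ Nat.choose m k * (2 * (m + 1 - k)) := Nat.mul_le_mul_left _ h2
      _ = (2 * Nat.choose m k) * (m + 1 - k) := by ring
  exact Nat.le_of_mul_le_mul_right this hpos

lemma choose8 (m k : ℕ) (h : 2 * k + 4 ≤ m) :
    Nat.choose (m + 3) k ≤ 8 * Nat.choose m k := by
  calc Nat.choose (m + 3) k ≤ 2 * Nat.choose (m + 2) k := chooseDouble (m+2) k (by omega)
    _ ≤ 2 * (2 * Nat.choose (m + 1) k) := Nat.mul_le_mul_left _ (chooseDouble (m+1) k (by omega))
    _ ≤ 2 * (2 * (2 * Nat.choose m k)) := by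
        have := chooseDouble m k (by omega)
        omega
    _ = 8 * Nat.choose m k := by ring

lemma numBound (r : ℕ) (hr : 3 ≤ r) (ε : ℝ) (hε1 : 0 < ε) (hε2 : ε < 1) :
    ∃ N : ℕ, 4 * r + 4 ≤ N ∧ ∀ n ≥ N,
      ((r * r * r) * Nat.choose n (r - 3) : ℝ) < (1 - ε) * Nat.choose (n - 3) (r - 2) := by
  have h1ε : (0:ℝ) < 1 - ε := by linarith
  refine ⟨4 * r + 4 + (⌈(8 * (r:ℝ)^4 + 1) / (1 - ε)⌉₊ + 1), by omega, ?_⟩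
  intro n hn
  set k := r - 3 with hk
  obtain ⟨m, rfl⟩ : ∃ m, n = m + 3 := ⟨n - 3, by omega⟩
  have hm3 : (m + 3) - 3 = m := by omega
  have hr2 : r - 2 = k + 1 := by omega
  rw [hm3, hr2]
  have hkm : k + 1 ≤ m := by omega
  have hmk : ((8 * (r:ℝ)^4 + 1) : ℝ) ≤ (1 - ε) * ((m - k : ℕ) : ℝ) := by
    have h2 : (⌈(8 * (r:ℝ)^4 + 1) / (1 - ε)⌉₊ : ℝ) ≤ ((m - k : ℕ) : ℝ) := by
      have : ⌈(8 * (r:ℝ)^4 + 1) / (1 - ε)⌉₊ ≤ m - k := by omega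
      exact_mod_cast this
    have h3 : (8 * (r:ℝ)^4 + 1) / (1 - ε) ≤ ((m - k : ℕ) : ℝ) :=
      le_trans (Nat.le_ceil _) h2
    calc (8 * (r:ℝ)^4 + 1) = ((8 * (r:ℝ)^4 + 1) / (1 - ε)) * (1 - ε) := by field_simp
      _ ≤ ((m - k : ℕ) : ℝ) * (1 - ε) := mul_le_mul_of_nonneg_right h3 (le_of_lt h1ε)
      _ = (1 - ε) * ((m - k : ℕ) : ℝ) := by ring
  have hch : (Nat.choose m (k + 1) * (k + 1) : ℕ) = Nat.choose m k * (m - k) :=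
    Nat.choose_succ_right_eq m k
  have hcast : (Nat.choose m (k+1) : ℝ) * ((k:ℝ)+1) = (Nat.choose m k : ℝ) * ((m - k : ℕ):ℝ) := by
    exact_mod_cast hch
  have hcpos : (1:ℝ) ≤ (Nat.choose m k : ℝ) := by
    exact_mod_cast Nat.one_le_iff_ne_zero.mpr (Nat.choose_pos (by omega : k ≤ m)).ne'
  have hXpos : (0:ℝ) < (Nat.choose m k : ℝ) := lt_of_lt_of_le one_pos hcpos
  have h8 : (Nat.choose (m + 3) k : ℝ) ≤ 8 * Nat.choose m k := by
    exact_mod_cast choose8 m k (by omega)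
  have hk1r : ((k:ℝ) + 1) ≤ (r:ℝ) := by
    have : k + 1 ≤ r := by omega
    exact_mod_cast this
  have hkey : (8 * ((r:ℝ) * r * r) * ((k:ℝ) + 1) : ℝ) < (1 - ε) * ((m - k : ℕ) : ℝ) := by
    have hrr : (0:ℝ) ≤ 8 * ((r:ℝ) * r * r) := by positivity
    calc (8 * ((r:ℝ) * r * r)) * ((k:ℝ) + 1) ≤ (8 * ((r:ℝ) * r * r)) * (r:ℝ) :=
          mul_le_mul_of_nonneg_left hk1r hrr
      _ = 8 * (r:ℝ)^4 := by ring
      _ < 8 * (r:ℝ)^4 + 1 := by linarith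
      _ ≤ (1 - ε) * ((m - k : ℕ) : ℝ) := hmk
  have hk1pos : (0:ℝ) < (k:ℝ) + 1 := by positivity
  have hfin : (r:ℝ) * r * r * (8 * Nat.choose m k) * ((k:ℝ)+1)
      < (1 - ε) * (Nat.choose m (k+1) : ℝ) * ((k:ℝ)+1) := by
    calc (r:ℝ) * r * r * (8 * Nat.choose m k) * ((k:ℝ)+1)
        = (8 * ((r:ℝ) * r * r) * ((k:ℝ) + 1)) * (Nat.choose m k : ℝ) := by ring
      _ < ((1 - ε) * ((m - k : ℕ) : ℝ)) * (Nat.choose m k : ℝ) :=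
          mul_lt_mul_of_pos_right hkey hXpos
      _ = (1 - ε) * ((Nat.choose m k : ℝ) * ((m - k : ℕ):ℝ)) := by ring
      _ = (1 - ε) * ((Nat.choose m (k+1) : ℝ) * ((k:ℝ)+1)) := by rw [hcast]
      _ = (1 - ε) * (Nat.choose m (k+1) : ℝ) * ((k:ℝ)+1) := by ring
  have h2 : (r:ℝ) * r * r * (8 * Nat.choose m k) < (1 - ε) * (Nat.choose m (k+1) : ℝ) :=
    lt_of_mul_lt_mul_right hfin (le_of_lt hk1pos)
  calc (r:ℝ) * r * r * (Nat.choose (m + 3) k : ℝ)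
      ≤ (r:ℝ) * r * r * (8 * Nat.choose m k) :=
        mul_le_mul_of_nonneg_left h8 (by positivity)
    _ < (1 - ε) * (Nat.choose m (k+1) : ℝ) := h2

end Helpers

set_option maxHeartbeats 1000000 in
theorem stmt16 (r : ℕ) (hr : 3 ≤ r) (ε : ℝ) (hε1 : 0 < ε) (hε2 : ε < 1) :
    ∃ N : ℕ, ∀ n ≥ N, ∀ t : ℕ, (t : ℝ) ≤ ε * Nat.choose (n - 3) (r - 2) →
    ∀ F ⊆ (Finset.range n).powersetCard r, FamIntersecting F →
    F.card + t = maxDeg F + Nat.choose (n - 3) (r - 2) →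
    ∃ x ∈ Finset.range n, ∃ y ∈ Finset.range n, ∃ z ∈ Finset.range n,
      x ≠ y ∧ x ≠ z ∧ y ≠ z ∧
      (∀ E ∈ F, 2 ≤ (E ∩ ({x, y, z} : Finset ℕ)).card) ∧
      ∃ G : Finset (Finset ℕ), F ⊆ G ∧ (G \ F).card ≤ 3 * t ∧
        ((Finset.range n).powersetCard r
          |>.filter fun E => (E ∩ ({x, y, z} : Finset ℕ)).card = 2) ⊆ G ∧
        G ⊆ ((Finset.range n).powersetCard r
          |>.filter fun E => 2 ≤ (E ∩ ({x, y, z} : Finset ℕ)).card) := by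
  obtain ⟨N0, hN0ge, hN0⟩ := numBound r hr ε hε1 hε2
  refine ⟨N0, fun n hn t ht F hF hFint heq => ?_⟩
  set C := Nat.choose (n - 3) (r - 2) with hCdef
  have hnum := hN0 n hn
  have hC1 : 1 ≤ C := Nat.one_le_iff_ne_zero.mpr (Nat.choose_pos (by omega : r - 2 ≤ n - 3)).ne'
  have hCR : (1:ℝ) ≤ (C:ℝ) := by exact_mod_cast hC1
  have htC : t < C := by
    have h1 : (t:ℝ) < (C:ℝ) := lt_of_le_of_lt ht (by nlinarith)
    exact_mod_cast h1
  have hkey : ∀ m : ℕ, C ≤ m + t → (r*r*r) * Nat.choose n (r-3) < m := by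
    intro m hm
    have h0 : (C:ℝ) ≤ (m:ℝ) + (t:ℝ) := by exact_mod_cast hm
    have h1 : ((1-ε) * C : ℝ) ≤ (m:ℝ) := by nlinarith
    have h2 : ((r*r*r) * Nat.choose n (r-3) : ℝ) < (m:ℝ) := by
      refine lt_of_lt_of_le ?_ h1
      calc ((r*r*r) * Nat.choose n (r-3) : ℝ) = (r:ℝ) * r * r * Nat.choose n (r-3) := by
            push_cast; ring
        _ < (1-ε) * C := hnum
    exact_mod_cast h2
  have hdeg : ∀ a (E : Finset ℕ), E ∈ F → a ∈ E →
      (F.filter fun E' => a ∈ E').card ≤ maxDeg F := by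
    intro a E hE ha
    exact Finset.le_sup (f := fun x => (F.filter fun E => x ∈ E).card)
      (Finset.mem_biUnion.mpr ⟨E, hE, ha⟩)
  have hmiss : ∀ a : ℕ, C ≤ (F.filter fun E => a ∉ E).card + t := by
    intro a
    have hsplit := Finset.card_filter_add_card_filter_not
      (s := F) (fun E : Finset ℕ => a ∈ E)
    by_cases hmem : ∃ E ∈ F, a ∈ E
    · obtain ⟨E, hE, ha⟩ := hmem
      have h1 := hdeg a E hE ha
      omega
    · push_neg at hmem
      have h2 : F.filter (fun E => a ∈ E) = ∅ := filter_eq_empty_iff.mpr hmem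
      have h3 : (F.filter (fun E => a ∈ E)).card = 0 := by rw [h2]; rfl
      omega
  have hcardF : C ≤ F.card + t := by omega
  have hFne : F.Nonempty := by
    rw [← Finset.card_pos]; omega
  -- Step 1 : a two-element cover of F
  have hcov : ∃ y w, ∀ E ∈ F, y ∈ E ∨ w ∈ E := by
    by_contra hcon
    push_neg at hcon
    choose E3 hE3F hE3a hE3b using hcon
    obtain ⟨E1, hE1⟩ := hFne
    have hE1r : E1.card = r := (mem_powersetCard.mp (hF hE1)).2
    have hsub : F ⊆ E1.biUnion (fun u => (E3 u u).biUnion (fun v => (E3 u v).biUnion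
        (fun w0 => F.filter (fun E => u ∈ E ∧ v ∈ E ∧ w0 ∈ E ∧ u ≠ v ∧ u ≠ w0 ∧ v ≠ w0)))) := by
      intro E hE
      obtain ⟨u, hu⟩ := hFint E hE E1 hE1
      rw [mem_inter] at hu
      obtain ⟨v, hv⟩ := hFint E hE (E3 u u) (hE3F u u)
      rw [mem_inter] at hv
      obtain ⟨w0, hw0⟩ := hFint E hE (E3 u v) (hE3F u v)
      rw [mem_inter] at hw0
      refine Finset.mem_biUnion.mpr ⟨u, hu.2, Finset.mem_biUnion.mpr ⟨v, hv.2,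
        Finset.mem_biUnion.mpr ⟨w0, hw0.2, ?_⟩⟩⟩
      refine Finset.mem_filter.mpr ⟨hE, hu.1, hv.1, hw0.1, ?_, ?_, ?_⟩
      · rintro rfl; exact hE3a u u hv.2
      · rintro rfl; exact hE3a u v hw0.2
      · rintro rfl; exact hE3b u v hw0.2
    have hcard : F.card ≤ r * (r * (r * Nat.choose n (r-3))) := by
      refine le_trans (Finset.card_le_card hsub) ?_
      have h1 : ∀ u ∈ E1, ((E3 u u).biUnion (fun v => (E3 u v).biUnion
          (fun w0 => F.filter (fun E => u ∈ E ∧ v ∈ E ∧ w0 ∈ E ∧ u ≠ v ∧ u ≠ w0 ∧ v ≠ w0)))).card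
          ≤ r * (r * Nat.choose n (r-3)) := by
        intro u _
        have h2 : ∀ v ∈ E3 u u, ((E3 u v).biUnion
            (fun w0 => F.filter (fun E => u ∈ E ∧ v ∈ E ∧ w0 ∈ E ∧ u ≠ v ∧ u ≠ w0 ∧ v ≠ w0))).card
            ≤ r * Nat.choose n (r-3) := by
          intro v _
          have h3 : ∀ w0 ∈ E3 u v,
              (F.filter (fun E => u ∈ E ∧ v ∈ E ∧ w0 ∈ E ∧ u ≠ v ∧ u ≠ w0 ∧ v ≠ w0)).card
              ≤ Nat.choose n (r-3) := fun w0 _ => tripleBound n r F hF u v w0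
          have hc : (E3 u v).card = r := (mem_powersetCard.mp (hF (hE3F u v))).2
          calc _ ≤ (E3 u v).card * Nat.choose n (r-3) :=
                Finset.card_biUnion_le_card_mul _ _ _ h3
            _ = r * Nat.choose n (r-3) := by rw [hc]
        have hc : (E3 u u).card = r := (mem_powersetCard.mp (hF (hE3F u u))).2
        calc _ ≤ (E3 u u).card * (r * Nat.choose n (r-3)) :=
              Finset.card_biUnion_le_card_mul _ _ _ h2
          _ = r * (r * Nat.choose n (r-3)) := by rw [hc]
      calc _ ≤ E1.card * (r * (r * Nat.choose n (r-3))) :=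
            Finset.card_biUnion_le_card_mul _ _ _ h1
        _ = r * (r * (r * Nat.choose n (r-3))) := by rw [hE1r]
    have h4 := hkey F.card hcardF
    have h5 : (r*r*r) * Nat.choose n (r-3) = r * (r * (r * Nat.choose n (r-3))) := by ring
    omega
  obtain ⟨y, w, hyw⟩ := hcov
  set P := F.filter (fun E => w ∉ E) with hPdef
  set Q := F.filter (fun E => y ∉ E) with hQdef
  have hPsubF : P ⊆ F := filter_subset _ _
  have hQsubF : Q ⊆ F := filter_subset _ _
  have hPcard : C ≤ P.card + t := hmiss w
  have hQcard : C ≤ Q.card + t := hmiss y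
  have hPne : P.Nonempty := by rw [← Finset.card_pos]; omega
  have hQne : Q.Nonempty := by rw [← Finset.card_pos]; omega
  obtain ⟨Ep, hEp⟩ := hPne
  obtain ⟨Eq0, hEq0⟩ := hQne
  have hEpF : Ep ∈ F := hPsubF hEp
  have hEq0F : Eq0 ∈ F := hQsubF hEq0
  have hEpw : w ∉ Ep := (mem_filter.mp hEp).2
  have hEq0y : y ∉ Eq0 := (mem_filter.mp hEq0).2
  have hyEp : y ∈ Ep := (hyw Ep hEpF).resolve_right hEpw
  have hwEq0 : w ∈ Eq0 := (hyw Eq0 hEq0F).resolve_left hEq0y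
  have hywne : y ≠ w := fun h => hEpw (h ▸ hyEp)
  have hPy : ∀ E ∈ P, y ∈ E := fun E hE =>
    (hyw E (hPsubF hE)).resolve_right (mem_filter.mp hE).2
  have hQw : ∀ E ∈ Q, w ∈ E := fun E hE =>
    (hyw E (hQsubF hE)).resolve_left (mem_filter.mp hE).2
  -- Step 2 : a vertex v in all edges of P
  have hv : ∃ v, v ≠ y ∧ v ≠ w ∧ ∀ E ∈ P, v ∈ E := by
    by_contra hcon
    push_neg at hcon
    have hcon' : ∀ v, ∃ E, E ∈ P ∧ (v ≠ y → v ≠ w → v ∉ E) := by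
      intro v
      by_cases h1 : v ≠ y ∧ v ≠ w
      · obtain ⟨E, hE1, hE2⟩ := hcon v h1.1 h1.2
        exact ⟨E, hE1, fun _ _ => hE2⟩
      · exact ⟨Ep, hEp, fun hy' hw' => absurd ⟨hy', hw'⟩ h1⟩
    choose E2 hE2P hE2 using hcon'
    have hsub : Q ⊆ Ep.biUnion (fun u => (E2 u).biUnion (fun v => Q.filter
        (fun E => u ∈ E ∧ v ∈ E ∧ w ∈ E ∧ u ≠ v ∧ u ≠ w ∧ v ≠ w))) := by
      intro E hE
      have hEF : E ∈ F := hQsubF hE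
      have hEy : y ∉ E := (mem_filter.mp hE).2
      have hEw : w ∈ E := hQw E hE
      obtain ⟨u, hu⟩ := hFint E hEF Ep hEpF
      rw [mem_inter] at hu
      have huy : u ≠ y := fun h => hEy (h ▸ hu.1)
      have huw : u ≠ w := fun h => hEpw (h ▸ hu.2)
      have hE2u : u ∉ E2 u := hE2 u huy huw
      have hE2uP : E2 u ∈ P := hE2P u
      obtain ⟨v, hv⟩ := hFint E hEF (E2 u) (hPsubF hE2uP)
      rw [mem_inter] at hv
      have hvy : v ≠ y := fun h => hEy (h ▸ hv.1)
      have hvw : v ≠ w := fun h => (mem_filter.mp hE2uP).2 (h ▸ hv.2)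
      have huv : u ≠ v := fun h => hE2u (h ▸ hv.2)
      exact mem_biUnion.mpr ⟨u, hu.2, mem_biUnion.mpr ⟨v, hv.2,
        mem_filter.mpr ⟨hE, hu.1, hv.1, hEw, huv, huw, hvw⟩⟩⟩
    have hEpr : Ep.card = r := (mem_powersetCard.mp (hF hEpF)).2
    have hQle : Q.card ≤ r * (r * Nat.choose n (r-3)) := by
      refine le_trans (Finset.card_le_card hsub) ?_
      have h1 : ∀ u ∈ Ep, ((E2 u).biUnion (fun v => Q.filter
          (fun E => u ∈ E ∧ v ∈ E ∧ w ∈ E ∧ u ≠ v ∧ u ≠ w ∧ v ≠ w))).card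
          ≤ r * Nat.choose n (r-3) := by
        intro u _
        have h3 : ∀ v ∈ E2 u, (Q.filter
            (fun E => u ∈ E ∧ v ∈ E ∧ w ∈ E ∧ u ≠ v ∧ u ≠ w ∧ v ≠ w)).card
            ≤ Nat.choose n (r-3) := fun v _ =>
          tripleBound n r Q (hQsubF.trans hF) u v w
        have hc : (E2 u).card = r := (mem_powersetCard.mp (hF (hPsubF (hE2P u)))).2
        calc _ ≤ (E2 u).card * Nat.choose n (r-3) :=
              Finset.card_biUnion_le_card_mul _ _ _ h3
          _ = r * Nat.choose n (r-3) := by rw [hc]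
      calc _ ≤ Ep.card * (r * Nat.choose n (r-3)) :=
            Finset.card_biUnion_le_card_mul _ _ _ h1
        _ = r * (r * Nat.choose n (r-3)) := by rw [hEpr]
    have h4 := hkey Q.card hQcard
    have h5 : r * (r * Nat.choose n (r-3)) ≤ (r*r*r) * Nat.choose n (r-3) := by
      have h6 : r * (r * Nat.choose n (r-3)) ≤ r * (r * (r * Nat.choose n (r-3))) :=
        Nat.mul_le_mul_left _ (Nat.mul_le_mul_left _
          (Nat.le_mul_of_pos_left _ (by omega)))
      have h7 : (r*r*r) * Nat.choose n (r-3) = r * (r * (r * Nat.choose n (r-3))) := by ring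
      omega
    omega
  obtain ⟨v, hvy, hvw, hvP⟩ := hv
  -- Step 3 : v is in all edges of Q
  have hvQ : ∀ E ∈ Q, v ∈ E := by
    by_contra hcon
    push_neg at hcon
    obtain ⟨Es, hEsQ, hvEs⟩ := hcon
    have hEsF : Es ∈ F := hQsubF hEsQ
    have hEsy : y ∉ Es := (mem_filter.mp hEsQ).2
    have hEsr : Es.card = r := (mem_powersetCard.mp (hF hEsF)).2
    have hsub : P ⊆ Es.biUnion (fun a => P.filter
        (fun E => a ∈ E ∧ y ∈ E ∧ v ∈ E ∧ a ≠ y ∧ a ≠ v ∧ y ≠ v)) := by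
      intro E hE
      obtain ⟨a, ha⟩ := hFint E (hPsubF hE) Es hEsF
      rw [mem_inter] at ha
      have hay : a ≠ y := fun h => hEsy (h ▸ ha.2)
      have hav : a ≠ v := fun h => hvEs (h ▸ ha.2)
      exact mem_biUnion.mpr ⟨a, ha.2, mem_filter.mpr
        ⟨hE, ha.1, hPy E hE, hvP E hE, hay, hav, Ne.symm hvy⟩⟩
    have hPle : P.card ≤ r * Nat.choose n (r-3) := by
      refine le_trans (Finset.card_le_card hsub) ?_
      have h3 : ∀ a ∈ Es, (P.filter
          (fun E => a ∈ E ∧ y ∈ E ∧ v ∈ E ∧ a ≠ y ∧ a ≠ v ∧ y ≠ v)).card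
          ≤ Nat.choose n (r-3) := fun a _ =>
        tripleBound n r P (hPsubF.trans hF) a y v
      calc _ ≤ Es.card * Nat.choose n (r-3) := Finset.card_biUnion_le_card_mul _ _ _ h3
        _ = r * Nat.choose n (r-3) := by rw [hEsr]
    have h4 := hkey P.card hPcard
    have h5 : r * Nat.choose n (r-3) ≤ (r*r*r) * Nat.choose n (r-3) :=
      Nat.mul_le_mul_right _ (by nlinarith)
    omega
  -- distinctness and membership
  have hyv : y ≠ v := Ne.symm hvy
  have hwv : w ≠ v := Ne.symm hvw
  have hcover2 : ∀ E ∈ F, 2 ≤ (E ∩ ({y, w, v} : Finset ℕ)).card := by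
    intro E hE
    rw [interTripleCard E y w v hywne hyv hwv]
    by_cases hw' : w ∈ E
    · by_cases hy' : y ∈ E
      · simp [hy', hw']
      · have hEQ : E ∈ Q := mem_filter.mpr ⟨hE, hy'⟩
        have := hvQ E hEQ
        simp [hw', this, hy']
    · have hEP : E ∈ P := mem_filter.mpr ⟨hE, hw'⟩
      have h1 := hPy E hEP
      have h2 := hvP E hEP
      simp [h1, h2, hw']
  have hrangeF : ∀ E ∈ F, E ⊆ Finset.range n := fun E hE => (mem_powersetCard.mp (hF hE)).1
  have hyn : y ∈ Finset.range n := hrangeF Ep hEpF hyEp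
  have hwn : w ∈ Finset.range n := hrangeF Eq0 hEq0F hwEq0
  have hvn : v ∈ Finset.range n := hrangeF Ep hEpF (hvP Ep hEp)
  refine ⟨y, hyn, w, hwn, v, hvn, hywne, hyv, hwv, hcover2, ?_⟩
  -- Part 2 : the family G
  set T : Finset ℕ := {y, w, v} with hTdef
  set X2 := ((Finset.range n).powersetCard r).filter (fun E => (E ∩ T).card = 2) with hX2def
  refine ⟨F ∪ X2, subset_union_left, ?_, subset_union_right, ?_⟩
  · -- card bound
    have hX2card : X2.card ≤ 3 * C := by
      have hsub : X2 ⊆ (((Finset.range n).powersetCard r).filter (fun E => y ∈ E ∧ w ∈ E ∧ v ∉ E))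
          ∪ (((Finset.range n).powersetCard r).filter (fun E => y ∈ E ∧ v ∈ E ∧ w ∉ E))
          ∪ (((Finset.range n).powersetCard r).filter (fun E => w ∈ E ∧ v ∈ E ∧ y ∉ E)) := by
        intro E hE
        rw [hX2def, mem_filter] at hE
        obtain ⟨hEpc, hc⟩ := hE
        rw [interTripleCard E y w v hywne hyv hwv] at hc
        by_cases hy' : y ∈ E
        · by_cases hw' : w ∈ E
          · by_cases hv' : v ∈ E
            · exact absurd hc (by simp [hy', hw', hv'])
            · exact mem_union.mpr (Or.inl (mem_union.mpr (Or.inl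
                (mem_filter.mpr ⟨hEpc, hy', hw', hv'⟩))))
          · by_cases hv' : v ∈ E
            · exact mem_union.mpr (Or.inl (mem_union.mpr (Or.inr
                (mem_filter.mpr ⟨hEpc, hy', hv', hw'⟩))))
            · exact absurd hc (by simp [hy', hw', hv'])
        · by_cases hw' : w ∈ E
          · by_cases hv' : v ∈ E
            · exact mem_union.mpr (Or.inr (mem_filter.mpr ⟨hEpc, hw', hv', hy'⟩))
            · exact absurd hc (by simp [hy', hw', hv'])
          · by_cases hv' : v ∈ E
            · exact absurd hc (by simp [hy', hw', hv'])
            · exact absurd hc (by simp [hy', hw', hv'])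
      have hb1 := pairBound n r _ (Subset.refl _) y w v hywne hyv hwv hyn hwn hvn
      have hb2 := pairBound n r _ (Subset.refl _) y v w hyv hywne (Ne.symm hwv) hyn hvn hwn
      have hb3 := pairBound n r _ (Subset.refl _) w v y hwv (Ne.symm hywne) (Ne.symm hyv) hwn hvn hyn
      have h1 := Finset.card_le_card hsub
      have h2 := Finset.card_union_le
        ((((Finset.range n).powersetCard r).filter (fun E => y ∈ E ∧ w ∈ E ∧ v ∉ E))
          ∪ (((Finset.range n).powersetCard r).filter (fun E => y ∈ E ∧ v ∈ E ∧ w ∉ E)))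
        (((Finset.range n).powersetCard r).filter (fun E => w ∈ E ∧ v ∈ E ∧ y ∉ E))
      have h3 := Finset.card_union_le
        (((Finset.range n).powersetCard r).filter (fun E => y ∈ E ∧ w ∈ E ∧ v ∉ E))
        (((Finset.range n).powersetCard r).filter (fun E => y ∈ E ∧ v ∈ E ∧ w ∉ E))
      omega
    -- double counting
    set F2 := F.filter (fun E => (E ∩ T).card = 2) with hF2def
    set F3 := F.filter (fun E => ¬ (E ∩ T).card = 2) with hF3def
    have hsplit : F2.card + F3.card = F.card :=
      Finset.card_filter_add_card_filter_not (fun E => (E ∩ T).card = 2)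
    have hTcard : T.card ≤ 3 := by
      rw [hTdef]
      refine le_trans (card_insert_le _ _) (Nat.succ_le_succ ?_)
      refine le_trans (card_insert_le _ _) (Nat.succ_le_succ ?_)
      simp
    have hF3val : ∀ E ∈ F3, (E ∩ T).card = 3 := by
      intro E hE
      rw [hF3def, mem_filter] at hE
      have h1 := hcover2 E hE.1
      have h2 : (E ∩ T).card ≤ 3 := le_trans (card_le_card inter_subset_right) hTcard
      omega
    have hsum1 : ∑ E ∈ F, (E ∩ T).card = 2 * F2.card + 3 * F3.card := by
      rw [← Finset.sum_filter_add_sum_filter_not F (fun E => (E ∩ T).card = 2)]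
      rw [Finset.sum_const_nat (m := 2) (fun E hE => (mem_filter.mp hE).2),
        Finset.sum_const_nat (m := 3) hF3val]
      ring
    have hsum2 : ∑ E ∈ F, (E ∩ T).card =
        (F.filter (fun E => y ∈ E)).card + (F.filter (fun E => w ∈ E)).card
          + (F.filter (fun E => v ∈ E)).card := by
      have h1 : ∀ E ∈ F, (E ∩ T).card =
          (if y ∈ E then 1 else 0) + ((if w ∈ E then 1 else 0) + (if v ∈ E then 1 else 0)) := by
        intro E _
        rw [interTripleCard E y w v hywne hyv hwv]; ring
      rw [Finset.sum_congr rfl h1, Finset.sum_add_distrib, Finset.sum_add_distrib]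
      rw [← Finset.card_filter, ← Finset.card_filter, ← Finset.card_filter]
      ring
    have hdy : (F.filter (fun E => y ∈ E)).card ≤ maxDeg F := hdeg y Ep hEpF hyEp
    have hdw : (F.filter (fun E => w ∈ E)).card ≤ maxDeg F := hdeg w Eq0 hEq0F hwEq0
    have hdv : (F.filter (fun E => v ∈ E)).card ≤ maxDeg F := hdeg v Ep hEpF (hvP Ep hEp)
    have hF2X : F2 ⊆ X2 ∩ F := by
      intro E hE
      rw [hF2def, mem_filter] at hE
      exact mem_inter.mpr ⟨mem_filter.mpr ⟨hF hE.1, hE.2⟩, hE.1⟩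
    have hGF : (F ∪ X2) \ F = X2 \ F := by
      ext E; simp only [mem_sdiff, mem_union]; tauto
    have h5 := Finset.card_sdiff_add_card_inter X2 F
    have h6 : F2.card ≤ (X2 ∩ F).card := card_le_card hF2X
    rw [hGF]
    omega
  · intro E hE
    rw [mem_union] at hE
    rcases hE with hE | hE
    · exact mem_filter.mpr ⟨hF hE, hcover2 E hE⟩
    · rw [hX2def, mem_filter] at hE
      exact mem_filter.mpr ⟨hE.1, by omega⟩
end

section
/- Let F ⊆ binom([n], r) be intersecting with n sufficiently large, and let 3 ≤ u ≤ r be a real number. If |F| > binom(n-1, r-1) - binom(n-u-1, r-1) + binom(n-u-1, r-u), then d(F) = |F| - Δ(F) < binom(n-u-1, r-u). -/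
open Finset

namespace Frankl17

lemma choose_le_choose_succ {m k : ℕ} (h : 2*(k+1) ≤ m) : m.choose k ≤ m.choose (k+1) := by
  have hid := Nat.choose_succ_right_eq m k
  have hkm : k + 1 ≤ m - k := by omega
  have h1 : m.choose k * (k+1) ≤ m.choose k * (m - k) := Nat.mul_le_mul_left _ hkm
  rw [← hid] at h1
  exact Nat.le_of_mul_le_mul_right h1 (by omega)

lemma choose_mono_low {m : ℕ} : ∀ {t s : ℕ}, s ≤ t → 2*t ≤ m → m.choose s ≤ m.choose t := by
  intro t
  induction t with
  | zero => intro s hs _; interval_cases s; exact le_refl _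
  | succ t iht =>
    intro s hs hm
    rcases Nat.eq_or_lt_of_le hs with rfl | hlt
    · exact le_refl _
    · exact le_trans (iht (by omega) (by omega)) (choose_le_choose_succ (by omega))

lemma mul_choose_le {m s K : ℕ} (h : K*(s+1) + s ≤ m) : K * m.choose s ≤ m.choose (s+1) := by
  have hid := Nat.choose_succ_right_eq m s
  have h2 : K * (s+1) ≤ m - s := by omega
  have h1 : (K * m.choose s) * (s+1) ≤ m.choose (s+1) * (s+1) := by
    calc K * m.choose s * (s+1) = m.choose s * (K*(s+1)) := by ring
    _ ≤ m.choose s * (m - s) := Nat.mul_le_mul_left _ h2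
    _ = m.choose (s+1) * (s+1) := hid.symm
  exact Nat.le_of_mul_le_mul_right h1 (by omega)

lemma choose_ground_pred {m s : ℕ} (h : 2*s + 3 ≤ m) : m.choose s ≤ 2 * (m-1).choose s := by
  cases s with
  | zero => simp
  | succ s =>
    have hm : m = (m-1) + 1 := by omega
    have hP : m.choose (s+1) = (m-1).choose s + (m-1).choose (s+1) := by
      conv_lhs => rw [hm]
      exact Nat.choose_succ_succ _ _
    have : (m-1).choose s ≤ (m-1).choose (s+1) := choose_mono_low (by omega) (by omega)
    omega

end Frankl17


namespace Frankl17x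

/-- star bound: family of k-subsets of X all containing z has size ≤ C(|X|-1, k-1) -/
lemma star_card_le {X : Finset ℕ} {k : ℕ} {A : Finset (Finset ℕ)}
    (hA : ∀ S ∈ A, S ⊆ X ∧ S.card = k) {z : ℕ} (hz : ∀ S ∈ A, z ∈ S) :
    A.card ≤ (X.card - 1).choose (k-1) := by
  by_cases hzX : z ∈ X
  · have h : A.card ≤ (Finset.powersetCard (k-1) (X.erase z)).card := by
      apply card_le_card_of_injOn (fun S => S.erase z)
      · intro S hS
        rw [mem_coe, mem_powersetCard]
        constructor
        · intro w hw
          rcases mem_erase.mp hw with ⟨hw1, hw2⟩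
          exact mem_erase.mpr ⟨hw1, (hA S hS).1 hw2⟩
        · rw [card_erase_of_mem (hz S hS), (hA S hS).2]
      · intro S hS T hT hST
        have h2 : S.erase z = T.erase z := hST
        calc S = insert z (S.erase z) := (insert_erase (hz S hS)).symm
        _ = insert z (T.erase z) := by rw [h2]
        _ = T := insert_erase (hz T hT)
    rwa [card_powersetCard, card_erase_of_mem hzX] at h
  · have : A = ∅ := eq_empty_of_forall_notMem (fun S hS => hzX ((hA S hS).1 (hz S hS)))
    simp [this]

/-- double star bound -/
lemma star2_card_le {X : Finset ℕ} {k : ℕ} {A : Finset (Finset ℕ)}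
    (hA : ∀ S ∈ A, S ⊆ X ∧ S.card = k) {x y : ℕ} (hxy : x ≠ y)
    (hx : ∀ S ∈ A, x ∈ S) (hy : ∀ S ∈ A, y ∈ S) :
    A.card ≤ (X.card - 2).choose (k-2) := by
  rcases A.eq_empty_or_nonempty with rfl | ⟨S₀, hS₀⟩
  · simp
  have hxX : x ∈ X := (hA S₀ hS₀).1 (hx S₀ hS₀)
  have hyX : y ∈ X := (hA S₀ hS₀).1 (hy S₀ hS₀)
  have hyS : ∀ S ∈ A, y ∈ S.erase x := fun S hS => mem_erase.mpr ⟨Ne.symm hxy, hy S hS⟩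
  have h : A.card ≤ (Finset.powersetCard (k-2) ((X.erase x).erase y)).card := by
    apply card_le_card_of_injOn (fun S => (S.erase x).erase y)
    · intro S hS
      rw [mem_coe, mem_powersetCard]
      constructor
      · intro w hw
        rcases mem_erase.mp hw with ⟨hw1, hw2⟩
        rcases mem_erase.mp hw2 with ⟨hw3, hw4⟩
        exact mem_erase.mpr ⟨hw1, mem_erase.mpr ⟨hw3, (hA S hS).1 hw4⟩⟩
      · rw [card_erase_of_mem (hyS S hS), card_erase_of_mem (hx S hS), (hA S hS).2]
        omega
    · intro S hS T hT hST
      have h2 : (S.erase x).erase y = (T.erase x).erase y := hST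
      calc S = insert x (insert y ((S.erase x).erase y)) := by
              rw [insert_erase (hyS S hS), insert_erase (hx S hS)]
      _ = insert x (insert y ((T.erase x).erase y)) := by rw [h2]
      _ = T := by rw [insert_erase (hyS T hT), insert_erase (hx T hT)]
  rw [card_powersetCard, card_erase_of_mem (mem_erase.mpr ⟨Ne.symm hxy, hyX⟩),
    card_erase_of_mem hxX] at h
  have he : X.card - 1 - 1 = X.card - 2 := by omega
  rwa [he] at h

/-- one forced element -/
lemma forced_one {X : Finset ℕ} {b : ℕ} {B : Finset (Finset ℕ)}
    (hB : ∀ S ∈ B, S ⊆ X ∧ S.card = b) {A₀ : Finset ℕ}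
    (hmeet : ∀ S ∈ B, (S ∩ A₀).Nonempty) :
    B.card ≤ A₀.card * X.card.choose (b-1) := by
  classical
  set f : Finset ℕ → ℕ := fun S => if h : (S ∩ A₀).Nonempty then h.choose else 0 with hf
  have hfmem : ∀ S ∈ B, f S ∈ S ∩ A₀ := by
    intro S hS
    have h := hmeet S hS
    simp only [hf, dif_pos h]
    exact h.choose_spec
  have h : B.card ≤ (A₀ ×ˢ Finset.powersetCard (b-1) X).card := by
    apply card_le_card_of_injOn (fun S => (f S, S.erase (f S)))
    · intro S hS
      have hm := mem_inter.mp (hfmem S hS)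
      rw [mem_coe, mem_product]
      refine ⟨hm.2, ?_⟩
      rw [mem_powersetCard]
      exact ⟨fun w hw => (hB S hS).1 (mem_of_mem_erase hw),
        by rw [card_erase_of_mem hm.1, (hB S hS).2]⟩
    · intro S hS T hT hST
      have h1 : f S = f T := congrArg Prod.fst hST
      have h2 : S.erase (f S) = T.erase (f T) := congrArg Prod.snd hST
      calc S = insert (f S) (S.erase (f S)) := (insert_erase (mem_inter.mp (hfmem S hS)).1).symm
      _ = insert (f T) (T.erase (f T)) := by rw [h2, h1]
      _ = T := insert_erase (mem_inter.mp (hfmem T hT)).1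
  rwa [card_product, card_powersetCard] at h

/-- two forced elements -/
lemma forced_two {X : Finset ℕ} {a bsz : ℕ} {A : Finset (Finset ℕ)}
    (hA : ∀ S ∈ A, S ⊆ X ∧ S.card = a) {B : Finset (Finset ℕ)}
    (hBsz : ∀ S ∈ B, S.card = bsz) {B₀ : Finset ℕ} (hB₀ : B₀ ∈ B)
    (g : ℕ → Finset ℕ) (hg : ∀ z, g z ∈ B) (hgz : ∀ z, z ∉ g z)
    (hmeet : ∀ S ∈ A, ∀ T ∈ B, (S ∩ T).Nonempty) :
    A.card ≤ bsz * bsz * X.card.choose (a-2) := by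
  classical
  set f : Finset ℕ → Finset ℕ → ℕ :=
    fun T S => if h : (S ∩ T).Nonempty then h.choose else 0 with hf
  have hfmem : ∀ T S, (S ∩ T).Nonempty → f T S ∈ S ∩ T := by
    intro T S h
    simp only [hf, dif_pos h]
    exact h.choose_spec
  set z1 : Finset ℕ → ℕ := fun S => f B₀ S with hz1
  set z2 : Finset ℕ → ℕ := fun S => f (g (z1 S)) S with hz2
  have hz1mem : ∀ S ∈ A, z1 S ∈ S ∩ B₀ := fun S hS => hfmem _ _ (hmeet S hS B₀ hB₀)
  have hz2mem : ∀ S ∈ A, z2 S ∈ S ∩ g (z1 S) :=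
    fun S hS => hfmem _ _ (hmeet S hS _ (hg (z1 S)))
  have hne : ∀ S ∈ A, z2 S ≠ z1 S := by
    intro S hS h
    have h5 := (mem_inter.mp (hz2mem S hS)).2
    rw [h] at h5
    exact hgz _ h5
  have hz2e : ∀ S ∈ A, z2 S ∈ S.erase (z1 S) :=
    fun S hS => mem_erase.mpr ⟨hne S hS, (mem_inter.mp (hz2mem S hS)).1⟩
  have h : A.card ≤ ((B₀.sigma (fun z => g z)) ×ˢ Finset.powersetCard (a-2) X).card := by
    apply card_le_card_of_injOn
      (fun S => ((⟨z1 S, z2 S⟩ : Σ _ : ℕ, ℕ), (S.erase (z1 S)).erase (z2 S)))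
    · intro S hS
      rw [mem_coe, mem_product, mem_sigma]
      refine ⟨⟨(mem_inter.mp (hz1mem S hS)).2, (mem_inter.mp (hz2mem S hS)).2⟩, ?_⟩
      rw [mem_powersetCard]
      refine ⟨fun w hw => (hA S hS).1 (mem_of_mem_erase (mem_of_mem_erase hw)), ?_⟩
      rw [card_erase_of_mem (hz2e S hS), card_erase_of_mem (mem_inter.mp (hz1mem S hS)).1,
        (hA S hS).2]
      omega
    · intro S hS T hT hST
      have e0 : (⟨z1 S, z2 S⟩ : Σ _ : ℕ, ℕ) = ⟨z1 T, z2 T⟩ := congrArg Prod.fst hST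
      have e1 : z1 S = z1 T := congrArg Sigma.fst e0
      have e2 : z2 S = z2 T := congrArg Sigma.snd e0
      have e3 : (S.erase (z1 S)).erase (z2 S) = (T.erase (z1 T)).erase (z2 T) :=
        congrArg Prod.snd hST
      calc S = insert (z1 S) (insert (z2 S) ((S.erase (z1 S)).erase (z2 S))) := by
              rw [insert_erase (hz2e S hS), insert_erase (mem_inter.mp (hz1mem S hS)).1]
      _ = insert (z1 T) (insert (z2 T) ((T.erase (z1 T)).erase (z2 T))) := by rw [e3, e1, e2]
      _ = T := by rw [insert_erase (hz2e T hT), insert_erase (mem_inter.mp (hz1mem T hT)).1]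
  rw [card_product, card_powersetCard, card_sigma] at h
  have hsum : ∑ z ∈ B₀, (g z).card = B₀.card * bsz := by
    rw [Finset.sum_congr rfl (fun z _ => hBsz (g z) (hg z))]
    simp [mul_comm]
  rw [hsum, hBsz B₀ hB₀] at h
  exact h

end Frankl17x

open Finset Frankl17 Frankl17x

namespace Frankl17c

theorem cross (a : ℕ) (ha : 2 ≤ a) :
    ∀ w : ℕ, 1 ≤ w → ∀ b : ℕ, w ≤ b → b ≤ a →
    ∀ X : Finset ℕ, 8*(a+1)^3 + w ≤ X.card →
    ∀ A B : Finset (Finset ℕ),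
      (∀ S ∈ A, S ⊆ X ∧ S.card = a) →
      (∀ S ∈ B, S ⊆ X ∧ S.card = b) →
      (∀ S ∈ A, ∀ T ∈ B, (S ∩ T).Nonempty) →
      (b = a → B.card ≤ A.card) →
      ((X.card - w).choose (b - w) ≤ B.card) →
      A.card + B.card ≤ (∑ l ∈ Finset.range w, (X.card - (l+1)).choose (a-1))
        + (X.card - w).choose (b - w) := by
  intro w
  induction w with
  | zero => omega
  | succ w ih =>
    intro _ b hwb hba X hX A B hA hB hAB hcap hthr
    have ha3 : a + 1 ≤ (a+1)^3 := Nat.le_self_pow (by norm_num) _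
    have hb1 : 1 ≤ b := by omega
    have hμbig : 4*a + 16 + (4*(a*a)+2*a)*(a-1) ≤ X.card := by
      have h8 : 4*a + 16 + (4*(a*a)+2*a)*(a-1) ≤ 8*(a+1)^3 := by
        calc 4*a + 16 + (4*(a*a)+2*a)*(a-1) ≤ 4*a + 16 + (4*(a*a)+2*a)*a := by
              have := Nat.mul_le_mul_left (4*(a*a)+2*a) (show a - 1 ≤ a by omega)
              omega
        _ ≤ 8*(a+1)^3 := by nlinarith
      omega
    have hbμ : b ≤ X.card := by
      have : (4*(a*a)+2*a)*(a-1) ≥ 0 := Nat.zero_le _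
      omega
    have htpos : 1 ≤ (X.card - (w+1)).choose (b - (w+1)) := Nat.choose_pos (by omega)
    have hBne : B.Nonempty := card_pos.mp (by omega)
    by_cases hstar : ∃ z, ∀ S ∈ B, z ∈ S
    · obtain ⟨z, hz⟩ := hstar
      obtain ⟨S₀, hS₀⟩ := hBne
      have hzX : z ∈ X := (hB S₀ hS₀).1 (hz S₀ hS₀)
      rcases Nat.eq_zero_or_pos w with rfl | hw1
      · -- base case w+1 = 1 : full star
        set starfam := (Finset.powersetCard b X).filter (fun S => z ∈ S) with hsf
        have hBsub : B ⊆ starfam := by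
          intro S hS
          rw [hsf, mem_filter, mem_powersetCard]
          exact ⟨⟨(hB S hS).1, (hB S hS).2⟩, hz S hS⟩
        have hstarle : starfam.card ≤ (X.card - 1).choose (b-1) := by
          apply star_card_le (A := starfam)
          · intro S hS
            rw [hsf, mem_filter, mem_powersetCard] at hS
            exact hS.1
          · intro S hS
            rw [hsf, mem_filter] at hS
            exact hS.2
        have hthr' : (X.card - 1).choose (b-1) ≤ B.card := hthr
        have hBeq : B = starfam := eq_of_subset_of_card_le hBsub (le_trans hstarle hthr')
        have hzA : ∀ S ∈ A, z ∈ S := by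
          intro S hS
          by_contra hzS
          have hsub : insert z S ⊆ X := insert_subset hzX (hA S hS).1
          have hcd : b - 1 ≤ (X \ insert z S).card := by
            rw [card_sdiff_of_subset hsub, card_insert_of_notMem hzS, (hA S hS).2]
            have : (4*(a*a)+2*a)*(a-1) ≥ 0 := Nat.zero_le _
            omega
          obtain ⟨T, hTsub, hTcard⟩ := Finset.exists_subset_card_eq hcd
          have hzT : z ∉ T := by
            intro h
            have := hTsub h
            rw [mem_sdiff] at this
            exact this.2 (mem_insert_self _ _)
          have hS'B : insert z T ∈ B := by
            rw [hBeq, hsf, mem_filter, mem_powersetCard]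
            refine ⟨⟨insert_subset hzX (fun v hv => (mem_sdiff.mp (hTsub hv)).1), ?_⟩,
              mem_insert_self _ _⟩
            rw [card_insert_of_notMem hzT, hTcard]
            omega
          obtain ⟨v, hv⟩ := hAB S hS _ hS'B
          rw [mem_inter, mem_insert] at hv
          rcases hv.2 with rfl | hvT
          · exact hzS hv.1
          · exact (mem_sdiff.mp (hTsub hvT)).2 (mem_insert_of_mem hv.1)
        have hAle : A.card ≤ (X.card - 1).choose (a-1) := star_card_le hA hzA
        have hBle : B.card ≤ (X.card - 1).choose (b-1) := by
          rw [hBeq]; exact hstarle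
        rw [Finset.sum_range_one]
        have e1 : X.card - (0+1) = X.card - 1 := by norm_num
        have e2 : b - (0+1) = b - 1 := by norm_num
        rw [e1, e2]
        omega
      · -- recursive case: erase z
        set X' := X.erase z with hX'
        have hXc : X'.card = X.card - 1 := card_erase_of_mem hzX
        set A₁ := A.filter (fun S => z ∈ S) with hA₁
        set A₂ := A.filter (fun S => ¬ z ∈ S) with hA₂
        set B' := B.image (fun S => S.erase z) with hB'
        have hB'card : B'.card = B.card := by
          rw [hB']
          apply card_image_of_injOn
          intro S hS T hT hST
          have h2 : S.erase z = T.erase z := hST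
          calc S = insert z (S.erase z) := (insert_erase (hz S hS)).symm
          _ = insert z (T.erase z) := by rw [h2]
          _ = T := insert_erase (hz T hT)
        have hsplit : A₁.card + A₂.card = A.card :=
          card_filter_add_card_filter_not _
        have hA1le : A₁.card ≤ (X.card - 1).choose (a-1) := by
          apply star_card_le (z := z)
          · intro S hS
            rw [hA₁, mem_filter] at hS
            exact hA S hS.1
          · intro S hS
            rw [hA₁, mem_filter] at hS
            exact hS.2
        have hIH := ih hw1 (b-1) (by omega) (by omega) X' (by omega) A₂ B'
          (by
            intro S hS
            rw [hA₂, mem_filter] at hS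
            refine ⟨?_, (hA S hS.1).2⟩
            intro v hv
            exact mem_erase.mpr ⟨fun h => hS.2 (h ▸ hv), (hA S hS.1).1 hv⟩)
          (by
            intro S' hS'
            rw [hB', mem_image] at hS'
            obtain ⟨S, hS, rfl⟩ := hS'
            constructor
            · intro v hv
              rcases mem_erase.mp hv with ⟨h1, h2⟩
              exact mem_erase.mpr ⟨h1, (hB S hS).1 h2⟩
            · rw [card_erase_of_mem (hz S hS), (hB S hS).2])
          (by
            intro S hS T' hT'
            rw [hA₂, mem_filter] at hS
            rw [hB', mem_image] at hT'
            obtain ⟨T, hT, rfl⟩ := hT'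
            obtain ⟨v, hv⟩ := hAB S hS.1 T hT
            rw [mem_inter] at hv
            exact ⟨v, mem_inter.mpr ⟨hv.1, mem_erase.mpr ⟨fun h => hS.2 (h ▸ hv.1), hv.2⟩⟩⟩)
          (fun h => absurd h (by omega))
          (by
            rw [hB'card, hXc]
            have e1 : X.card - 1 - w = X.card - (w+1) := by omega
            have e2 : b - 1 - w = b - (w+1) := by omega
            rw [e1, e2]
            exact hthr)
        rw [hB'card, hXc] at hIH
        have e1 : X.card - 1 - w = X.card - (w+1) := by omega
        have e2 : b - 1 - w = b - (w+1) := by omega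
        rw [e1, e2] at hIH
        have hsum : ∑ l ∈ Finset.range (w+1), (X.card - (l+1)).choose (a-1)
            = (∑ l ∈ Finset.range w, (X.card - 1 - (l+1)).choose (a-1))
              + (X.card - 1).choose (a-1) := by
          rw [Finset.sum_range_succ']
          congr 1
          · apply Finset.sum_congr rfl
            intro l _
            congr 1
            omega
        rw [hsum]
        omega
    · -- no common element : covering bounds
      push_neg at hstar
      have hgex : ∀ z : ℕ, ∃ S, S ∈ B ∧ z ∉ S := by
        intro z
        obtain ⟨S, hS1, hS2⟩ := hstar z
        exact ⟨S, hS1, hS2⟩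
      choose g hg1 hg2 using hgex
      obtain ⟨B₀, hB₀⟩ := hBne
      have hAbound : A.card ≤ b * b * X.card.choose (a-2) :=
        forced_two hA (fun S hS => (hB S hS).2) hB₀ g hg1 hg2 hAB
      have hE : (2*(a*a) + a) * X.card.choose (a-2) ≤ (X.card-1).choose (a-1) := by
        have s1 : X.card.choose (a-2) ≤ 2 * (X.card-1).choose (a-2) :=
          choose_ground_pred (by omega)
        have s2 : (4*(a*a)+2*a) * (X.card-1).choose (a-2) ≤ (X.card-1).choose (a-2+1) :=
          mul_choose_le (by
            have e : a - 2 + 1 = a - 1 := by omega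
            rw [e]
            omega)
        have e : a - 2 + 1 = a - 1 := by omega
        rw [e] at s2
        calc (2*(a*a) + a) * X.card.choose (a-2)
            ≤ (2*(a*a) + a) * (2 * (X.card-1).choose (a-2)) := Nat.mul_le_mul_left _ s1
          _ = (4*(a*a)+2*a) * (X.card-1).choose (a-2) := by ring
          _ ≤ (X.card-1).choose (a-1) := s2
      have hfirst : (X.card - 1).choose (a-1)
          ≤ ∑ l ∈ Finset.range (w+1), (X.card - (l+1)).choose (a-1) := by
        have h0 : (0:ℕ) ∈ Finset.range (w+1) := mem_range.mpr (by omega)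
        have := Finset.single_le_sum (f := fun l => (X.card - (l+1)).choose (a-1))
          (fun _ _ => Nat.zero_le _) h0
        simpa using this
      rcases Nat.eq_or_lt_of_le hba with hab | hab'
      · -- b = a : use the cap
        have hcap' := hcap hab
        have h2 : A.card + B.card ≤ 2 * (b * b * X.card.choose (a-2)) := by omega
        have h3 : 2 * (b * b * X.card.choose (a-2)) ≤ (2*(a*a) + a) * X.card.choose (a-2) := by
          have : 2 * (b*b) ≤ 2*(a*a) + a := by nlinarith
          calc 2 * (b * b * X.card.choose (a-2)) = (2*(b*b)) * X.card.choose (a-2) := by ring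
          _ ≤ (2*(a*a) + a) * X.card.choose (a-2) := Nat.mul_le_mul_right _ this
        omega
      · -- b < a
        rcases A.eq_empty_or_nonempty with rfl | ⟨A₀, hA₀⟩
        · -- A empty
          have hBc : B.card ≤ X.card.choose b := by
            have hsub : B ⊆ Finset.powersetCard b X := by
              intro S hS
              rw [mem_powersetCard]
              exact hB S hS
            have := card_le_card hsub
            rwa [card_powersetCard] at this
          have hp := Nat.choose_succ_succ' (X.card - 1) (b-1)
          have e1 : X.card - 1 + 1 = X.card := by omega
          have e2 : b - 1 + 1 = b := by omega
          rw [e1, e2] at hp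
          have hmono : (X.card - 1).choose b ≤ (X.card - 1).choose (a-1) :=
            choose_mono_low (by omega) (by omega)
          rcases Nat.eq_zero_or_pos w with rfl | hw1
          · -- w = 0, t-term is C(μ-1, b-1)
            rw [Finset.sum_range_one]
            have e3 : X.card - (0+1) = X.card - 1 := by norm_num
            have e4 : b - (0+1) = b - 1 := by norm_num
            rw [e3, e4]
            simp only [card_empty, Nat.zero_add]
            omega
          · -- w ≥ 1 : two terms of the sum suffice
            have hb1' : (X.card - 1).choose (b-1) ≤ (X.card - 2).choose (a-1) := by
              have t1 : (X.card - 1).choose (b-1) ≤ 2 * (X.card - 1 - 1).choose (b-1) :=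
                choose_ground_pred (by omega)
              have e5 : X.card - 1 - 1 = X.card - 2 := by omega
              rw [e5] at t1
              have t2 : (X.card - 2).choose (b-1) ≤ (X.card - 2).choose (a-2) :=
                choose_mono_low (by omega) (by omega)
              have t3 : 2 * (X.card - 2).choose (a-2) ≤ (X.card - 2).choose (a-2+1) :=
                mul_choose_le (by
                  have e : a - 2 + 1 = a - 1 := by omega
                  rw [e]
                  omega)
              have e : a - 2 + 1 = a - 1 := by omega
              rw [e] at t3
              calc (X.card - 1).choose (b-1) ≤ 2 * (X.card - 2).choose (b-1) := t1
              _ ≤ 2 * (X.card - 2).choose (a-2) := Nat.mul_le_mul_left _ t2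
              _ ≤ (X.card - 2).choose (a-1) := t3
            have htwo : (X.card - 1).choose (a-1) + (X.card - 2).choose (a-1)
                ≤ ∑ l ∈ Finset.range (w+1), (X.card - (l+1)).choose (a-1) := by
              rw [Finset.sum_range_succ']
              have h0 : (0:ℕ) ∈ Finset.range w := mem_range.mpr (by omega)
              have hs := Finset.single_le_sum
                (f := fun l => (X.card - (l+1+1)).choose (a-1))
                (fun _ _ => Nat.zero_le _) h0
              norm_num at hs ⊢
              omega
            simp only [card_empty, Nat.zero_add]
            omega
        · -- A nonempty
          have hBbound : B.card ≤ a * X.card.choose (b-1) := by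
            have := forced_one hB (A₀ := A₀) (fun T hT => by
              obtain ⟨v, hv⟩ := hAB A₀ hA₀ T hT
              rw [mem_inter] at hv
              exact ⟨v, mem_inter.mpr ⟨hv.2, hv.1⟩⟩)
            rwa [(hA A₀ hA₀).2] at this
          have hmono2 : X.card.choose (b-1) ≤ X.card.choose (a-2) :=
            choose_mono_low (by omega) (by omega)
          have htot : A.card + B.card ≤ (2*(a*a) + a) * X.card.choose (a-2) := by
            have h1 : A.card + B.card ≤ b * b * X.card.choose (a-2) + a * X.card.choose (a-2) := by
              have := Nat.mul_le_mul_left a hmono2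
              omega
            have h2 : b * b * X.card.choose (a-2) + a * X.card.choose (a-2)
                = (b*b + a) * X.card.choose (a-2) := by ring
            have h3 : (b*b + a) * X.card.choose (a-2) ≤ (2*(a*a)+a) * X.card.choose (a-2) :=
              Nat.mul_le_mul_right _ (by nlinarith)
            omega
          omega

end Frankl17c

namespace Frankl17m
open Finset Frankl17 Frankl17x Frankl17c

lemma tele (r : ℕ) (hr : 2 ≤ r) : ∀ u n : ℕ, u + 2 ≤ n →
    (∑ l ∈ Finset.range u, (n-2-l).choose (r-2)) + (n-u-1).choose (r-1)
      = (n-1).choose (r-1) := by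
  intro u
  induction u with
  | zero => intro n h; simp
  | succ u ihu =>
    intro n h
    rw [Finset.sum_range_succ]
    have hp := Nat.choose_succ_succ' (n-u-2) (r-2)
    have e1 : n-u-2+1 = n-u-1 := by omega
    have e2 : r-2+1 = r-1 := by omega
    rw [e1, e2] at hp
    have e3 : n - 2 - u = n - u - 2 := by omega
    have e4 : n - (u+1) - 1 = n - u - 2 := by omega
    rw [e3, e4]
    have := ihu n (by omega)
    omega

end Frankl17m

open Finset in
theorem stmt17 (r u : ℕ) (hu1 : 3 ≤ u) (hu2 : u ≤ r) :
    ∃ N : ℕ, ∀ n ≥ N, ∀ F ⊆ (Finset.range n).powersetCard r, FamIntersecting F →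
      Nat.choose (n - 1) (r - 1) + Nat.choose (n - u - 1) (r - u)
        < F.card + Nat.choose (n - u - 1) (r - 1) →
      F.card - maxDeg F < Nat.choose (n - u - 1) (r - u) := by
  classical
  refine ⟨20*(r+2)^4, ?_⟩
  intro n hn F hF hint hcard
  by_contra hcon
  push_neg at hcon
  have hr3 : 3 ≤ r := le_trans hu1 hu2
  have hrn : 20*(r+2)^4 ≤ n := hn
  -- basic size facts about n
  have hp3 : r + 2 ≤ (r+2)^3 := Nat.le_self_pow (by norm_num) _
  have hp34 : 2*(r+2)^3 ≤ (r+2)^4 := by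
    calc 2*(r+2)^3 ≤ (r+2)*(r+2)^3 := Nat.mul_le_mul_right _ (by omega)
    _ = (r+2)^4 := by ring
  have hr34 : r^3 ≤ (r+2)^3 := Nat.pow_le_pow_left (by omega) 3
  have hnbig : 8*r^3 + u + 2*r + 20 ≤ n := by omega
  have hmem : ∀ S ∈ F, S ⊆ Finset.range n ∧ S.card = r := by
    intro S hS
    have := hF hS
    rwa [mem_powersetCard] at this
  set Δ := maxDeg F with hΔ
  clear_value Δ
  have hΔle : Δ ≤ F.card := by
    rw [hΔ]
    exact Finset.sup_le (fun z _ => card_filter_le _ _)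
  have hd : Δ + (n-u-1).choose (r-u) ≤ F.card := by omega
  have htpos : 1 ≤ (n-u-1).choose (r-u) := Nat.choose_pos (by omega)
  have hFne : F.Nonempty := card_pos.mp (by omega)
  have hbUne : (F.biUnion id).Nonempty := by
    obtain ⟨S, hS⟩ := hFne
    have hSne : S.Nonempty := card_pos.mp (by rw [(hmem S hS).2]; omega)
    obtain ⟨v, hv⟩ := hSne
    exact ⟨v, mem_biUnion.mpr ⟨S, hS, hv⟩⟩
  obtain ⟨x, hxU, hxmax⟩ :=
    Finset.exists_mem_eq_sup (F.biUnion id) hbUne (fun z => (F.filter fun E => z ∈ E).card)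
  have hdeg : ∀ z, (F.filter fun E => z ∈ E).card ≤ Δ := by
    intro z
    by_cases hzU : z ∈ F.biUnion id
    · rw [hΔ]
      exact Finset.le_sup (f := fun z => (F.filter fun E => z ∈ E).card) hzU
    · have hemp : F.filter (fun E => z ∈ E) = ∅ := by
        apply filter_eq_empty_iff.mpr
        intro E hE hzE
        exact hzU (mem_biUnion.mpr ⟨E, hE, hzE⟩)
      rw [hemp]
      simp
  have hΔx : Δ = (F.filter (fun E => x ∈ E)).card := by
    rw [hΔ]; exact hxmax
  set D := F.filter (fun E => ¬ x ∈ E) with hD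
  have hsplit : (F.filter (fun E => x ∈ E)).card + D.card = F.card := by
    rw [hD]; exact card_filter_add_card_filter_not _
  have hDcard : (n-u-1).choose (r-u) ≤ D.card := by omega
  have hDne : D.Nonempty := card_pos.mp (by omega)
  obtain ⟨B₀, hB₀⟩ := hDne
  have hB₀F : B₀ ∈ F := (mem_filter.mp hB₀).1
  have hB₀x : x ∉ B₀ := (mem_filter.mp hB₀).2
  -- the links of the star at x
  set L := (F.filter (fun E => x ∈ E)).image (fun S => S.erase x) with hL
  have hLcard : L.card = Δ := by
    rw [hL, hΔx]
    apply card_image_of_injOn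
    intro S hS T hT hST
    have h2 : S.erase x = T.erase x := hST
    have hxS : x ∈ S := (mem_filter.mp hS).2
    have hxT : x ∈ T := (mem_filter.mp hT).2
    calc S = insert x (S.erase x) := (insert_erase hxS).symm
    _ = insert x (T.erase x) := by rw [h2]
    _ = T := insert_erase hxT
  have hLfam : ∀ S ∈ L, S ⊆ Finset.range n ∧ S.card = r - 1 := by
    intro S hS
    rw [hL, mem_image] at hS
    obtain ⟨T, hT, rfl⟩ := hS
    rw [mem_filter] at hT
    exact ⟨fun v hv => (hmem T hT.1).1 (mem_of_mem_erase hv),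
      by rw [card_erase_of_mem hT.2, (hmem T hT.1).2]⟩
  have hLmeet : ∀ S ∈ L, ∀ T ∈ D, (S ∩ T).Nonempty := by
    intro S hS T hT
    rw [hL, mem_image] at hS
    obtain ⟨S', hS', rfl⟩ := hS
    rw [mem_filter] at hS'
    have hTD := mem_filter.mp hT
    obtain ⟨v, hv⟩ := hint S' hS'.1 T hTD.1
    rw [mem_inter] at hv
    exact ⟨v, mem_inter.mpr ⟨mem_erase.mpr ⟨fun h => hTD.2 (h ▸ hv.2), hv.1⟩, hv.2⟩⟩
  by_cases hone : ∃ y, ∀ B ∈ D, y ∈ B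
  · -- covered case: all of D contains y
    obtain ⟨y, hy⟩ := hone
    have hyB₀ : y ∈ B₀ := hy B₀ hB₀
    have hyx : y ≠ x := fun h => hB₀x (h ▸ hyB₀)
    have hyn : y ∈ Finset.range n := (hmem B₀ hB₀F).1 hyB₀
    have hxn : x ∈ Finset.range n := by
      rcases mem_biUnion.mp hxU with ⟨S, hS, hxS⟩
      exact (hmem S hS).1 hxS
    set Fxy := (F.filter (fun E => x ∈ E)).filter (fun E => y ∈ E) with hFxy
    set Fxy' := (F.filter (fun E => x ∈ E)).filter (fun E => ¬ y ∈ E) with hFxy'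
    have hsplit2 : Fxy.card + Fxy'.card = Δ := by
      rw [hΔx, hFxy, hFxy']
      exact card_filter_add_card_filter_not _
    have hcapD : D.card ≤ Fxy'.card := by
      have hsub : Fxy ∪ D ⊆ F.filter (fun E => y ∈ E) := by
        intro S hS
        rcases mem_union.mp hS with h | h
        · have h' := mem_filter.mp h
          exact mem_filter.mpr ⟨(mem_filter.mp h'.1).1, h'.2⟩
        · exact mem_filter.mpr ⟨(mem_filter.mp h).1, hy S h⟩
      have hdisj : Disjoint Fxy D := by
        rw [disjoint_left]
        intro S hS hS'
        exact (mem_filter.mp hS').2 (mem_filter.mp (mem_filter.mp hS).1).2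
      have h1 := card_le_card hsub
      rw [card_union_of_disjoint hdisj] at h1
      have h2 := hdeg y
      omega
    set X := ((Finset.range n).erase x).erase y with hXdef
    have hyex : y ∈ (Finset.range n).erase x := mem_erase.mpr ⟨hyx, hyn⟩
    have hXcard : X.card = n - 2 := by
      rw [hXdef, card_erase_of_mem hyex, card_erase_of_mem hxn, card_range]
      omega
    set SA := Fxy'.image (fun S => S.erase x) with hSA
    set SB := D.image (fun S => S.erase y) with hSB
    have hSAcard : SA.card = Fxy'.card := by
      rw [hSA]
      apply card_image_of_injOn
      intro S hS T hT hST
      have h2 : S.erase x = T.erase x := hST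
      have hxS : x ∈ S := (mem_filter.mp (mem_filter.mp hS).1).2
      have hxT : x ∈ T := (mem_filter.mp (mem_filter.mp hT).1).2
      calc S = insert x (S.erase x) := (insert_erase hxS).symm
      _ = insert x (T.erase x) := by rw [h2]
      _ = T := insert_erase hxT
    have hSBcard : SB.card = D.card := by
      rw [hSB]
      apply card_image_of_injOn
      intro S hS T hT hST
      have h2 : S.erase y = T.erase y := hST
      calc S = insert y (S.erase y) := (insert_erase (hy S hS)).symm
      _ = insert y (T.erase y) := by rw [h2]
      _ = T := insert_erase (hy T hT)
    have hSAfam : ∀ S ∈ SA, S ⊆ X ∧ S.card = r - 1 := by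
      intro S hS
      rw [hSA, mem_image] at hS
      obtain ⟨T, hT, rfl⟩ := hS
      have hT1 := mem_filter.mp hT
      have hT2 := mem_filter.mp hT1.1
      constructor
      · intro v hv
        rcases mem_erase.mp hv with ⟨hv1, hv2⟩
        refine mem_erase.mpr ⟨fun h => hT1.2 (h ▸ hv2), mem_erase.mpr ⟨hv1, (hmem T hT2.1).1 hv2⟩⟩
      · rw [card_erase_of_mem hT2.2, (hmem T hT2.1).2]
    have hSBfam : ∀ S ∈ SB, S ⊆ X ∧ S.card = r - 1 := by
      intro S hS
      rw [hSB, mem_image] at hS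
      obtain ⟨T, hT, rfl⟩ := hS
      have hT1 := mem_filter.mp hT
      constructor
      · intro v hv
        rcases mem_erase.mp hv with ⟨hv1, hv2⟩
        refine mem_erase.mpr ⟨hv1, mem_erase.mpr ⟨fun h => hT1.2 (h ▸ hv2), (hmem T hT1.1).1 hv2⟩⟩
      · rw [card_erase_of_mem (hy T hT), (hmem T hT1.1).2]
    have hSmeet : ∀ S ∈ SA, ∀ T ∈ SB, (S ∩ T).Nonempty := by
      intro S hS T hT
      rw [hSA, mem_image] at hS
      rw [hSB, mem_image] at hT
      obtain ⟨S', hS', rfl⟩ := hS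
      obtain ⟨T', hT', rfl⟩ := hT
      have hS1 := mem_filter.mp hS'
      have hS2 := mem_filter.mp hS1.1
      have hT1 := mem_filter.mp hT'
      obtain ⟨v, hv⟩ := hint S' hS2.1 T' hT1.1
      rw [mem_inter] at hv
      refine ⟨v, mem_inter.mpr ⟨mem_erase.mpr ⟨fun h => hT1.2 (h ▸ hv.2), hv.1⟩,
        mem_erase.mpr ⟨fun h => hS1.2 (h ▸ hv.1), hv.2⟩⟩⟩
    have hra : 2 ≤ r - 1 := by omega
    have hXbig : 8*(r-1+1)^3 + (u-1) ≤ X.card := by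
      have e : r - 1 + 1 = r := by omega
      rw [e, hXcard]
      omega
    have hthr : (X.card - (u-1)).choose ((r-1) - (u-1)) ≤ SB.card := by
      rw [hSBcard, hXcard]
      have e1 : n - 2 - (u-1) = n - u - 1 := by omega
      have e2 : r - 1 - (u-1) = r - u := by omega
      rw [e1, e2]
      exact hDcard
    have hcross := Frankl17c.cross (r-1) hra (u-1) (by omega) (r-1) (by omega) (le_refl _)
      X hXbig SA SB hSAfam hSBfam hSmeet
      (fun _ => by rw [hSBcard, hSAcard]; exact hcapD) hthr
    rw [hSAcard, hSBcard, hXcard] at hcross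
    have e1 : n - 2 - (u-1) = n - u - 1 := by omega
    have e2 : r - 1 - (u-1) = r - u := by omega
    have e3 : r - 1 - 1 = r - 2 := by omega
    rw [e1, e2] at hcross
    simp only [e3] at hcross
    -- bound on Fxy
    have hFxyb : Fxy.card ≤ (n-2).choose (r-2) := by
      have h := Frankl17x.star2_card_le (X := Finset.range n) (k := r) (A := Fxy)
        (x := x) (y := y)
        (fun S hS => hmem S (mem_filter.mp (mem_filter.mp hS).1).1)
        (Ne.symm hyx)
        (fun S hS => (mem_filter.mp (mem_filter.mp hS).1).2)
        (fun S hS => (mem_filter.mp hS).2)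
      rwa [card_range] at h
    -- telescoping
    have hsum2 : (n-2).choose (r-2) + ∑ l ∈ Finset.range (u-1), (n-2-(l+1)).choose (r-2)
        = ∑ l ∈ Finset.range u, (n-2-l).choose (r-2) := by
      conv_rhs => rw [show u = (u-1)+1 from by omega]
      rw [Finset.sum_range_succ']
      simp
      omega
    have htel := Frankl17m.tele r (by omega) u n (by omega)
    have hFeq : F.card = Fxy.card + Fxy'.card + D.card := by omega
    omega
  · -- τ(D) ≥ 2 : crude bounds
    push_neg at hone
    have hgex : ∀ z, ∃ S, S ∈ D ∧ z ∉ S := by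
      intro z
      obtain ⟨S, h1, h2⟩ := hone z
      exact ⟨S, h1, h2⟩
    choose g hg1 hg2 using hgex
    have hΔbound : Δ ≤ r * r * n.choose (r-3) := by
      rw [← hLcard]
      have := Frankl17x.forced_two hLfam
        (fun T hT => (hmem T (mem_filter.mp hT).1).2) hB₀ g hg1 hg2 hLmeet
      rw [card_range] at this
      have e : r - 1 - 2 = r - 3 := by omega
      rwa [e] at this
    have hDbound : D.card ≤ r * Δ := by
      have hsub : D ⊆ B₀.biUnion (fun z => D.filter (fun E => z ∈ E)) := by
        intro T hT
        obtain ⟨v, hv⟩ := hint T (mem_filter.mp hT).1 B₀ hB₀F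
        rw [mem_inter] at hv
        exact mem_biUnion.mpr ⟨v, hv.2, mem_filter.mpr ⟨hT, hv.1⟩⟩
      calc D.card ≤ (B₀.biUnion (fun z => D.filter (fun E => z ∈ E))).card := card_le_card hsub
      _ ≤ ∑ z ∈ B₀, (D.filter (fun E => z ∈ E)).card := card_biUnion_le
      _ ≤ ∑ z ∈ B₀, Δ := by
          apply Finset.sum_le_sum
          intro z _
          have hss : D.filter (fun E => z ∈ E) ⊆ F.filter (fun E => z ∈ E) := by
            intro S hS
            rw [mem_filter] at hS ⊢
            exact ⟨(mem_filter.mp hS.1).1, hS.2⟩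
          exact le_trans (card_le_card hss) (hdeg z)
      _ = B₀.card * Δ := by rw [Finset.sum_const, smul_eq_mul]
      _ = r * Δ := by rw [(hmem B₀ hB₀F).2]
    -- lower bound for F.card
    have hM : (n-2).choose (r-2) + (n-u-1).choose (r-1) ≤ (n-1).choose (r-1) := by
      have hp := Nat.choose_succ_succ' (n-2) (r-2)
      have e1 : n-2+1 = n-1 := by omega
      have e2 : r-2+1 = r-1 := by omega
      rw [e1, e2] at hp
      have hmono : (n-u-1).choose (r-1) ≤ (n-2).choose (r-1) :=
        Nat.choose_le_choose _ (by omega)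
      omega
    have hFlb : (n-2).choose (r-2) < F.card := by omega
    -- E5 numeric
    have hE5 : (1+r)*(r * r * n.choose (r-3)) ≤ (n-2).choose (r-2) := by
      have s1 : n.choose (r-3) ≤ 2*(n-1).choose (r-3) := Frankl17.choose_ground_pred (by omega)
      have s2 : (n-1).choose (r-3) ≤ 2*(n-1-1).choose (r-3) :=
        Frankl17.choose_ground_pred (by omega)
      have e0 : n - 1 - 1 = n - 2 := by omega
      rw [e0] at s2
      have s3 : (4*((1+r)*(r*r))) * (n-2).choose (r-3) ≤ (n-2).choose (r-3+1) := by
        apply Frankl17.mul_choose_le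
        have e : r - 3 + 1 = r - 2 := by omega
        rw [e]
        have hKr : (4*((1+r)*(r*r)))*(r-2) ≤ 4*((1+r)*(r*r))*r :=
          Nat.mul_le_mul_left _ (by omega)
        have t1 : 4*((1+r)*(r*r))*r = 4*((1+r)*r^3) := by ring
        have t2 : (1+r)*r^3 ≤ (r+2)*(r+2)^3 := Nat.mul_le_mul (by omega) hr34
        have t3 : (r+2)*(r+2)^3 = (r+2)^4 := by ring
        have hp4 : r + 2 ≤ (r+2)^4 := Nat.le_self_pow (by norm_num) _
        omega
      have e : r - 3 + 1 = r - 2 := by omega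
      rw [e] at s3
      calc (1+r)*(r * r * n.choose (r-3)) = ((1+r)*(r*r)) * n.choose (r-3) := by ring
      _ ≤ ((1+r)*(r*r)) * (2*(n-1).choose (r-3)) := Nat.mul_le_mul_left _ s1
      _ ≤ ((1+r)*(r*r)) * (2*(2*(n-2).choose (r-3))) := by
          have := Nat.mul_le_mul_left 2 s2
          exact Nat.mul_le_mul_left _ (by omega)
      _ = (4*((1+r)*(r*r))) * (n-2).choose (r-3) := by ring
      _ ≤ (n-2).choose (r-2) := s3
    have hFub : F.card ≤ (1+r) * (r * r * n.choose (r-3)) := by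
      calc F.card = (F.filter (fun E => x ∈ E)).card + D.card := hsplit.symm
      _ = Δ + D.card := by rw [hΔx]
      _ ≤ Δ + r * Δ := by omega
      _ = (1+r) * Δ := by ring
      _ ≤ (1+r) * (r * r * n.choose (r-3)) := Nat.mul_le_mul_left _ hΔbound
    omega
end

section
/- Fix 0 ≤ C < 1 and r ≥ 2. For n sufficiently large, every intersecting family F ⊆ binom([n], r) satisfies d_C(F) ≤ (1 - C)·binom(n-1, r-1), with equality only if F is a full star (all r-sets containing some fixed vertex). -/
open Finset

/- ## Auxiliary lemmas -/

lemma count_lemma (P A : Finset ℕ) (x : ℕ) (hx : x ∈ P) (hxA : x ∉ A) (k : ℕ) :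
    ((P.powersetCard (k+1)).filter (fun S => x ∈ S ∧ S ∩ A = ∅)).card
      = (P \ insert x A).card.choose k := by
  rw [← Finset.card_powersetCard]
  apply Finset.card_bij' (fun S _ => S.erase x) (fun T _ => insert x T)
  · intro S hS
    simp only [mem_filter, mem_powersetCard] at hS
    exact insert_erase hS.2.1
  · intro T hT
    simp only [mem_powersetCard] at hT
    exact erase_insert (fun h => by
      have := hT.1 h; simp at this)
  · intro S hS
    simp only [mem_filter, mem_powersetCard] at hS
    obtain ⟨⟨hSP, hScard⟩, hxS, hSA⟩ := hS
    simp only [mem_powersetCard]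
    constructor
    · intro y hy
      simp only [mem_erase] at hy
      simp only [mem_sdiff, mem_insert]
      refine ⟨hSP hy.2, ?_⟩
      rintro (h | h)
      · exact hy.1 h
      · exact absurd (mem_inter.mpr ⟨hy.2, h⟩) (by simp [hSA])
    · rw [card_erase_of_mem hxS, hScard]; rfl
  · intro T hT
    simp only [mem_powersetCard] at hT
    have hxT : x ∉ T := fun h => by have := hT.1 h; simp at this
    simp only [mem_filter, mem_powersetCard]
    refine ⟨⟨?_, ?_⟩, mem_insert_self _ _, ?_⟩
    · intro y hy
      rcases mem_insert.mp hy with h | h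
      · exact h ▸ hx
      · exact (mem_sdiff.mp (hT.1 h)).1
    · rw [card_insert_of_notMem hxT, hT.2]
    · ext y
      simp only [mem_inter, mem_insert, notMem_empty, iff_false, not_and]
      rintro (rfl | h)
      · intro h; exact hxA h
      · intro hA
        have := hT.1 h; simp [hA] at this

lemma star_card (n r : ℕ) (hr : 1 ≤ r) (x : ℕ) (hx : x ∈ range n) :
    (((range n).powersetCard r).filter (fun S => x ∈ S)).card = (n-1).choose (r-1) := by
  have h := count_lemma (range n) ∅ x hx (notMem_empty x) (r-1)
  rw [show r - 1 + 1 = r by omega] at h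
  have e1 : ((range n).powersetCard r).filter (fun S => x ∈ S ∧ S ∩ (∅:Finset ℕ) = ∅)
      = ((range n).powersetCard r).filter (fun S => x ∈ S) := by
    apply filter_congr; intro S _; simp
  rw [e1] at h
  rw [h]
  congr 1
  rw [card_sdiff_of_subset (by simp [hx])]
  simp [card_range]

lemma telescope (m k : ℕ) : ∀ j, m.choose (k+1) - (m - j).choose (k+1) ≤ j * (m-1).choose k := by
  intro j
  induction j with
  | zero => simp
  | succ j ih =>
    rcases le_or_gt m j with h | h
    · have h1 : m - j = 0 := Nat.sub_eq_zero_of_le h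
      have h2 : m - (j+1) = 0 := Nat.sub_eq_zero_of_le (le_trans h (Nat.le_succ _))
      rw [h2]; rw [h1] at ih
      calc m.choose (k+1) - Nat.choose 0 (k+1) ≤ j * (m-1).choose k := ih
        _ ≤ (j+1) * (m-1).choose k := Nat.mul_le_mul_right _ (Nat.le_succ _)
    · have h1 : m - j = (m - (j+1)) + 1 := by omega
      have hc : (m - j).choose (k+1) = (m - (j+1)).choose (k+1) + (m - (j+1)).choose k := by
        rw [h1, Nat.choose_succ_succ, Nat.add_comm]
      have hd : (m - (j+1)).choose k ≤ (m-1).choose k :=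
        Nat.choose_le_choose _ (by omega)
      have h3 : m.choose (k+1) - (m - (j+1)).choose (k+1)
          ≤ (m.choose (k+1) - (m - j).choose (k+1)) + (m - (j+1)).choose k := by omega
      calc m.choose (k+1) - (m - (j+1)).choose (k+1)
          ≤ (m.choose (k+1) - (m - j).choose (k+1)) + (m - (j+1)).choose k := h3
        _ ≤ j * (m-1).choose k + (m-1).choose k := Nat.add_le_add ih hd
        _ = (j+1) * (m-1).choose k := by ring

lemma ident (n r : ℕ) (hn : 2 ≤ n) (hr : 2 ≤ r) :
    (r-1) * (n-1).choose (r-1) = (n-1) * (n-2).choose (r-2) := by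
  have h1 : n - 1 = (n-2) + 1 := by omega
  have h2 : r - 1 = (r-2) + 1 := by omega
  have h := Nat.add_one_mul_choose_eq (n-2) (r-2)
  rw [h1, h2, h]; ring

theorem stmt18 (r : ℕ) (hr : 2 ≤ r) (C : ℝ) (hC0 : 0 ≤ C) (hC1 : C < 1) :
    ∃ N : ℕ, ∀ n ≥ N, ∀ F ⊆ (Finset.range n).powersetCard r, FamIntersecting F →
      (F.card : ℝ) - C * maxDeg F ≤ (1 - C) * Nat.choose (n - 1) (r - 1) ∧
      ((F.card : ℝ) - C * maxDeg F = (1 - C) * Nat.choose (n - 1) (r - 1) →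
        ∃ x ∈ Finset.range n,
          F = ((Finset.range n).powersetCard r).filter fun E => x ∈ E) := by
  refine ⟨⌈(r:ℝ)^3/(1-C)⌉₊ + r + 3, ?_⟩
  intro n hn F hF hFint
  have hC1' : (0:ℝ) < 1 - C := by linarith
  have hnr : r + 3 ≤ n := le_trans (by omega) hn
  set B := (n-1).choose (r-1) with hBdef
  have hB : 0 < B := Nat.choose_pos (by omega)
  have hΔF : maxDeg F ≤ F.card := Finset.sup_le fun x _ => card_le_card (filter_subset _ _)
  by_cases hstar : ∃ x, ∀ A ∈ F, x ∈ A
  · obtain ⟨x, hx⟩ := hstar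
    rcases F.eq_empty_or_nonempty with rfl | ⟨A0, hA0⟩
    · have hm : maxDeg (∅ : Finset (Finset ℕ)) = 0 := by simp [maxDeg]
      rw [hm]
      constructor
      · simp only [card_empty, Nat.cast_zero, Nat.cast_zero, mul_zero, sub_zero]
        positivity
      · intro heq
        exfalso
        simp only [card_empty, Nat.cast_zero, mul_zero, sub_zero] at heq
        have : (0:ℝ) < (1-C) * B := by positivity
        rw [← heq] at this; exact lt_irrefl _ this
    · have hxA0 : x ∈ A0 := hx A0 hA0
      have hA0m := hF hA0
      rw [mem_powersetCard] at hA0m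
      have hxr : x ∈ range n := hA0m.1 hxA0
      have hdeg : (F.filter fun E => x ∈ E) = F := filter_eq_self.mpr hx
      have hΔ : maxDeg F = F.card := by
        refine le_antisymm hΔF ?_
        have hxb : x ∈ F.biUnion id := mem_biUnion.mpr ⟨A0, hA0, hxA0⟩
        calc F.card = (F.filter fun E => x ∈ E).card := by rw [hdeg]
          _ ≤ maxDeg F := Finset.le_sup (f := fun x => (F.filter fun E => x ∈ E).card) hxb
      have hsub : F ⊆ ((range n).powersetCard r).filter (fun E => x ∈ E) :=
        fun A hA => mem_filter.mpr ⟨hF hA, hx A hA⟩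
      have hcardstar : (((range n).powersetCard r).filter (fun E => x ∈ E)).card = B :=
        star_card n r (by omega) x hxr
      have hFB : F.card ≤ B := by
        calc F.card ≤ _ := card_le_card hsub
          _ = B := hcardstar
      constructor
      · rw [hΔ]
        have e : (F.card:ℝ) - C * F.card = (1-C) * F.card := by ring
        rw [e]
        exact mul_le_mul_of_nonneg_left (by exact_mod_cast hFB) (le_of_lt hC1')
      · intro heq
        refine ⟨x, hxr, ?_⟩
        rw [hΔ] at heq
        have e : (F.card:ℝ) - C * F.card = (1-C) * F.card := by ring
        rw [e] at heq
        have hcardeq : (F.card : ℝ) = B := mul_left_cancel₀ (ne_of_gt hC1') heq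
        have hcardeq' : F.card = B := by exact_mod_cast hcardeq
        exact (eq_of_subset_of_card_le hsub (by rw [hcardstar, hcardeq'])).symm ▸ rfl
  · push_neg at hstar
    set M := (n-1-r).choose (r-1) with hMdef
    have hMB : M ≤ B := Nat.choose_le_choose _ (by omega)
    have hdegbound : ∀ x ∈ F.biUnion id, (F.filter fun E => x ∈ E).card ≤ B - M := by
      intro x hxb
      obtain ⟨S0, hS0, hxS0⟩ := mem_biUnion.mp hxb
      have hS0m := hF hS0
      rw [mem_powersetCard] at hS0m
      have hxr : x ∈ range n := hS0m.1 hxS0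
      obtain ⟨A, hA, hxnA⟩ := hstar x
      have hAm := hF hA
      rw [mem_powersetCard] at hAm
      set G1 := ((range n).powersetCard r).filter (fun S => x ∈ S) with hG1
      set G2 := ((range n).powersetCard r).filter (fun S => x ∈ S ∧ S ∩ A = ∅) with hG2
      have hG2G1 : G2 ⊆ G1 := by
        intro S hS
        rw [hG2, mem_filter] at hS
        exact mem_filter.mpr ⟨hS.1, hS.2.1⟩
      have hsub : F.filter (fun E => x ∈ E) ⊆ G1 \ G2 := by
        intro S hS
        rw [mem_filter] at hS
        rw [mem_sdiff]
        refine ⟨mem_filter.mpr ⟨hF hS.1, hS.2⟩, ?_⟩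
        rw [hG2, mem_filter]
        rintro ⟨-, -, hSA⟩
        obtain ⟨y, hy⟩ := hFint S hS.1 A hA
        rw [hSA] at hy; exact notMem_empty y hy
      have hG1card : G1.card = B := star_card n r (by omega) x hxr
      have hG2card : G2.card = M := by
        have h := count_lemma (range n) A x hxr hxnA (r-1)
        rw [show r - 1 + 1 = r by omega] at h
        rw [hG2, h]
        congr 1
        rw [card_sdiff_of_subset]
        · rw [card_insert_of_notMem hxnA, card_range, hAm.2]; omega
        · intro y hy
          rcases mem_insert.mp hy with rfl | h'
          · exact hxr
          · exact hAm.1 h'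
      calc (F.filter fun E => x ∈ E).card ≤ (G1 \ G2).card := card_le_card hsub
        _ = G1.card - G2.card := card_sdiff_of_subset hG2G1
        _ = B - M := by rw [hG1card, hG2card]
    have hΔbound : maxDeg F ≤ B - M := Finset.sup_le hdegbound
    obtain ⟨A0, hA0, -⟩ := hstar 0
    have hA0m := hF hA0
    rw [mem_powersetCard] at hA0m
    have hcover : F ⊆ A0.biUnion (fun a => F.filter (fun E => a ∈ E)) := by
      intro S hS
      obtain ⟨a, ha⟩ := hFint S hS A0 hA0
      rw [mem_inter] at ha
      exact mem_biUnion.mpr ⟨a, ha.2, mem_filter.mpr ⟨hS, ha.1⟩⟩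
    have hFr : F.card ≤ r * (B - M) := by
      calc F.card ≤ (A0.biUnion (fun a => F.filter (fun E => a ∈ E))).card :=
            card_le_card hcover
        _ ≤ ∑ a ∈ A0, (F.filter (fun E => a ∈ E)).card := card_biUnion_le
        _ ≤ ∑ _a ∈ A0, (B - M) := by
            refine sum_le_sum fun a ha => ?_
            exact hdegbound a (mem_biUnion.mpr ⟨A0, hA0, ha⟩)
        _ = A0.card * (B - M) := by rw [sum_const, smul_eq_mul]
        _ = r * (B - M) := by rw [hA0m.2]
    set b := (n-2).choose (r-2) with hbdef
    have hbpos : 0 < b := Nat.choose_pos (by omega)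
    have htel : B - M ≤ r * b := by
      have h := telescope (n-1) (r-2) r
      rw [show r - 2 + 1 = r - 1 by omega] at h
      rw [show n - 1 - r = n - 1 - r from rfl] at h
      calc B - M = (n-1).choose (r-1) - (n-1-r).choose (r-1) := rfl
        _ ≤ r * (n-1-1).choose (r-2) := h
        _ = r * b := by rw [show n - 1 - 1 = n - 2 by omega]
    have hF2 : F.card ≤ r^2 * b := by
      calc F.card ≤ r * (B - M) := hFr
        _ ≤ r * (r * b) := Nat.mul_le_mul_left _ htel
        _ = r^2 * b := by ring
    -- real arithmetic
    have identR : ((r:ℝ) - 1) * B = ((n:ℝ) - 1) * b := by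
      have h := ident n r (by omega) hr
      have h2 : ((r-1 : ℕ) : ℝ) * B = ((n-1 : ℕ) : ℝ) * b := by exact_mod_cast h
      rwa [Nat.cast_sub (by omega : 1 ≤ r), Nat.cast_sub (by omega : 1 ≤ n),
        Nat.cast_one] at h2
    have hceil : (r:ℝ)^3 / (1-C) ≤ (⌈(r:ℝ)^3/(1-C)⌉₊ : ℝ) := Nat.le_ceil _
    have hnR : ((⌈(r:ℝ)^3/(1-C)⌉₊ : ℝ) + r + 3) ≤ (n:ℝ) := by
      have : ((⌈(r:ℝ)^3/(1-C)⌉₊ + r + 3 : ℕ) : ℝ) ≤ (n:ℝ) := by exact_mod_cast hn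
      push_cast at this; linarith
    have h1 : (r:ℝ)^3 < (1-C) * ((n:ℝ) - 1) := by
      have h2 : (r:ℝ)^3 ≤ (1-C) * ((⌈(r:ℝ)^3/(1-C)⌉₊ : ℝ)) := by
        rw [div_le_iff₀ hC1'] at hceil; linarith
      have h3 : ((⌈(r:ℝ)^3/(1-C)⌉₊ : ℝ)) < (n:ℝ) - 1 := by
        have : (0:ℝ) ≤ (r:ℝ) := Nat.cast_nonneg r
        linarith
      calc (r:ℝ)^3 ≤ (1-C) * ((⌈(r:ℝ)^3/(1-C)⌉₊ : ℝ)) := h2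
        _ < (1-C) * ((n:ℝ) - 1) := by exact mul_lt_mul_of_pos_left h3 hC1'
    have hrR : (2:ℝ) ≤ (r:ℝ) := by exact_mod_cast hr
    have hbR : (0:ℝ) < (b:ℝ) := by exact_mod_cast hbpos
    have key : ((r:ℝ)^2 * b : ℝ) < (1-C) * B := by
      have hr1 : (0:ℝ) < (r:ℝ) - 1 := by linarith
      have hlt : ((r:ℝ)-1) * (r:ℝ)^2 < (1-C) * ((n:ℝ)-1) := by
        have : ((r:ℝ)-1) * (r:ℝ)^2 ≤ (r:ℝ)^3 := by nlinarith [sq_nonneg (r:ℝ)]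
        linarith
      have step : ((r:ℝ)-1) * ((r:ℝ)^2 * b) < ((r:ℝ)-1) * ((1-C) * B) := by
        have e1 : ((r:ℝ)-1) * ((1-C) * B) = (1-C) * (((r:ℝ)-1) * B) := by ring
        rw [e1, identR]
        calc ((r:ℝ)-1) * ((r:ℝ)^2 * b) = (((r:ℝ)-1) * (r:ℝ)^2) * b := by ring
          _ < ((1-C) * ((n:ℝ)-1)) * b := mul_lt_mul_of_pos_right hlt hbR
          _ = (1-C) * (((n:ℝ)-1) * b) := by ring
      exact lt_of_mul_lt_mul_left step (le_of_lt hr1)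
    have hFreal : (F.card : ℝ) ≤ (r:ℝ)^2 * b := by
      have : ((F.card : ℕ) : ℝ) ≤ ((r^2 * b : ℕ) : ℝ) := by exact_mod_cast hF2
      push_cast at this; linarith
    have hmd : (0:ℝ) ≤ C * (maxDeg F : ℝ) :=
      mul_nonneg hC0 (Nat.cast_nonneg _)
    have hmain : (F.card : ℝ) - C * maxDeg F < (1-C) * B := by
      calc (F.card : ℝ) - C * maxDeg F ≤ (F.card : ℝ) := by linarith
        _ ≤ (r:ℝ)^2 * b := hFreal
        _ < (1-C) * B := key
    exact ⟨le_of_lt hmain, fun heq => absurd heq (ne_of_lt hmain)⟩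
end

section
/- Fix 2 ≤ C < 7/3 and r ≥ 3. For n sufficiently large: if F ⊆ binom([n], r) is intersecting with |F| > binom(n-3, r-3), then Δ(F)/|F| ≥ (3C - 6)/C. Consequently (letting C → 7/3), every intersecting F ⊆ binom([n], r) with |F| > binom(n-3, r-3) satisfies Δ(F) ≥ (3/7)·|F| for n sufficiently large. -/
open Finset

section Helpers

variable {H : Finset (Finset ℕ)} {S0 : Finset ℕ}

-- every edge has a nonempty trace on S0
lemma petal_card (h3 : ∀ S ∈ H, S.card = 3) (hE : E ∈ H) {w : ℕ}
    (htr : E ∩ S0 = {w}) : (E \ S0).card = 2 := by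
  have hc := h3 E hE
  have h := Finset.card_inter_add_card_sdiff E S0
  rw [htr] at h
  simp only [card_singleton] at h
  omega

lemma petal_card1 (h3 : ∀ S ∈ H, S.card = 3) (hE : E ∈ H) {w w' : ℕ} (hww : w ≠ w')
    (htr : E ∩ S0 = {w, w'}) : (E \ S0).card = 1 := by
  have hc := h3 E hE
  have h := Finset.card_inter_add_card_sdiff E S0
  rw [htr] at h
  rw [Finset.card_insert_of_notMem (by simp [hww]), card_singleton] at h
  omega

lemma cross_petal (hint : ∀ S ∈ H, ∀ T ∈ H, (S ∩ T).Nonempty)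
    {E E' : Finset ℕ} {w w' : ℕ} (hE : E ∈ H) (hE' : E' ∈ H)
    (htr : E ∩ S0 = {w}) (htr' : E' ∩ S0 = {w'}) (hww : w ≠ w') :
    ((E \ S0) ∩ (E' \ S0)).Nonempty := by
  obtain ⟨v, hv⟩ := hint E hE E' hE'
  simp only [mem_inter] at hv
  by_cases hvS : v ∈ S0
  · exfalso
    have h1 : v ∈ E ∩ S0 := mem_inter.mpr ⟨hv.1, hvS⟩
    have h2 : v ∈ E' ∩ S0 := mem_inter.mpr ⟨hv.2, hvS⟩
    rw [htr] at h1; rw [htr'] at h2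
    simp at h1 h2; exact hww (h1 ▸ h2 ▸ rfl)
  · exact ⟨v, mem_inter.mpr ⟨mem_sdiff.mpr ⟨hv.1, hvS⟩, mem_sdiff.mpr ⟨hv.2, hvS⟩⟩⟩

-- an edge not containing w meets the petal of a trace-w edge
lemma meet_petal (hint : ∀ S ∈ H, ∀ T ∈ H, (S ∩ T).Nonempty)
    {E E' : Finset ℕ} {w : ℕ} (hE : E ∈ H) (hE' : E' ∈ H)
    (htr' : E' ∩ S0 = {w}) (hwE : w ∉ E) :
    (E ∩ (E' \ S0)).Nonempty := by
  obtain ⟨v, hv⟩ := hint E hE E' hE'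
  simp only [mem_inter] at hv
  by_cases hvS : v ∈ S0
  · exfalso
    have h2 : v ∈ E' ∩ S0 := mem_inter.mpr ⟨hv.2, hvS⟩
    rw [htr'] at h2; simp at h2; subst h2; exact hwE hv.1
  · exact ⟨v, mem_inter.mpr ⟨hv.1, mem_sdiff.mpr ⟨hv.2, hvS⟩⟩⟩

end Helpers

lemma triple_perm1 (a b c : ℕ) : ({a, c, b} : Finset ℕ) = {a, b, c} := by
  ext u; simp only [mem_insert, mem_singleton]; tauto

lemma triple_perm2 (a b c : ℕ) : ({b, c, a} : Finset ℕ) = {a, b, c} := by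
  ext u; simp only [mem_insert, mem_singleton]; tauto

section Claim7

lemma caseA (H : Finset (Finset ℕ)) (h3 : ∀ S ∈ H, S.card = 3)
    (hint : ∀ S ∈ H, ∀ T ∈ H, (S ∩ T).Nonempty)
    (hnc : ∀ T : Finset ℕ, T.card ≤ 2 → ∃ S ∈ H, S ∩ T = ∅)
    (x y z : ℕ) (hxy : x ≠ y) (hxz : x ≠ z) (hyz : y ≠ z)
    (hS0 : ({x, y, z} : Finset ℕ) ∈ H)
    (Ee Ef : Finset ℕ) (hEe : Ee ∈ H) (hEf : Ef ∈ H)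
    (htre : Ee ∩ {x, y, z} = {x}) (htrf : Ef ∩ {x, y, z} = {x})
    (hdisj : (Ee \ {x, y, z}) ∩ (Ef \ {x, y, z}) = ∅) :
    ∃ W : Finset ℕ, W.card ≤ 7 ∧ ∀ E ∈ H, E ⊆ W := by
  set S0 : Finset ℕ := {x, y, z} with hS0def
  set e : Finset ℕ := Ee \ S0 with hedef
  set f : Finset ℕ := Ef \ S0 with hfdef
  have hecard : e.card = 2 := petal_card h3 hEe htre
  have hfcard : f.card = 2 := petal_card h3 hEf htrf
  have trace_nonempty : ∀ E ∈ H, (E ∩ S0).Nonempty := fun E hE => hint E hE S0 hS0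
  have mk_trace : ∀ a b c : ℕ, ({a, b, c} : Finset ℕ) = S0 → ∀ E' ∈ H,
      a ∉ E' → b ∉ E' → E' ∩ S0 = {c} := by
    intro a b c habc E' hE' ha hb
    have hne := trace_nonempty E' hE'
    have hcE' : c ∈ E' := by
      obtain ⟨v, hv⟩ := hne
      rw [mem_inter, ← habc] at hv
      simp only [mem_insert, mem_singleton] at hv
      rcases hv.2 with h | h | h
      · exact absurd (h ▸ hv.1) ha
      · exact absurd (h ▸ hv.1) hb
      · exact h ▸ hv.1
    ext u
    simp only [mem_inter, mem_singleton]
    constructor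
    · rintro ⟨huE, huS⟩
      rw [← habc] at huS
      simp only [mem_insert, mem_singleton] at huS
      rcases huS with h | h | h
      · exact absurd (h ▸ huE) ha
      · exact absurd (h ▸ huE) hb
      · exact h
    · rintro rfl
      exact ⟨hcE', by rw [← habc]; simp⟩
  have petal_in : ∀ E' ∈ H, ∀ w, w ≠ x → E' ∩ S0 = {w} → E' \ S0 ⊆ e ∪ f := by
    intro E' hE' w hw htr'
    obtain ⟨v, hv⟩ := cross_petal hint hE' hEe htr' htre hw
    obtain ⟨v', hv'⟩ := cross_petal hint hE' hEf htr' htrf hw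
    rw [mem_inter] at hv hv'
    have hvv : v ≠ v' := by
      rintro rfl
      have : v ∈ e ∩ f := mem_inter.mpr ⟨hv.2, hv'.2⟩
      rw [hdisj] at this; simp at this
    have hsub : ({v, v'} : Finset ℕ) ⊆ E' \ S0 :=
      insert_subset hv.1 (singleton_subset_iff.mpr hv'.1)
    have hcard : (E' \ S0).card ≤ ({v, v'} : Finset ℕ).card := by
      rw [card_insert_of_notMem (by simp [hvv]), card_singleton,
        petal_card h3 hE' htr']
    have heq := Finset.eq_of_subset_of_card_le hsub hcard
    rw [← heq]
    intro u hu
    simp only [mem_insert, mem_singleton] at hu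
    rcases hu with rfl | rfl
    · exact mem_union_left _ hv.2
    · exact mem_union_right _ hv'.2
  have no_yz : ∀ E' ∈ H, E' ∩ S0 ≠ {y, z} := by
    intro E' hE' htr'
    have hx' : x ∉ E' := by
      intro hx'
      have : x ∈ E' ∩ S0 := mem_inter.mpr ⟨hx', by simp [hS0def]⟩
      rw [htr'] at this
      simp only [mem_insert, mem_singleton] at this
      tauto
    obtain ⟨m, hm⟩ := card_eq_one.mp (petal_card1 h3 hE' hyz htr')
    obtain ⟨v, hv⟩ := meet_petal hint hE' hEe htre hx'
    obtain ⟨v', hv'⟩ := meet_petal hint hE' hEf htrf hx'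
    rw [mem_inter] at hv hv'
    have hvm : v = m := by
      have : v ∈ E' \ S0 := mem_sdiff.mpr ⟨hv.1, (mem_sdiff.mp hv.2).2⟩
      rw [hm] at this; simpa using this
    have hv'm : v' = m := by
      have : v' ∈ E' \ S0 := mem_sdiff.mpr ⟨hv'.1, (mem_sdiff.mp hv'.2).2⟩
      rw [hm] at this; simpa using this
    have : m ∈ e ∩ f := mem_inter.mpr ⟨hvm ▸ hv.2, hv'm ▸ hv'.2⟩
    rw [hdisj] at this; simp at this
  refine ⟨S0 ∪ (e ∪ f), ?_, ?_⟩
  · have a0 := card_union_le S0 (e ∪ f)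
    have a1 := card_union_le e f
    have a2 := card_insert_le x ({y, z} : Finset ℕ)
    have a3 := card_insert_le y ({z} : Finset ℕ)
    have a4 : ({z} : Finset ℕ).card = 1 := card_singleton z
    have a5 : S0.card ≤ 3 := by rw [hS0def]; omega
    omega
  intro E hE
  by_cases hxE : x ∈ E
  · by_cases hyE : y ∈ E
    · by_cases hzE : z ∈ E
      · -- E = S0
        have hsub : S0 ⊆ E := by
          intro u hu
          simp only [hS0def, mem_insert, mem_singleton] at hu
          rcases hu with rfl | rfl | rfl <;> assumption
        have heq := Finset.eq_of_subset_of_card_le hsub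
          (by rw [h3 E hE, h3 S0 hS0])
        intro u hu
        rw [← heq] at hu
        exact mem_union_left _ hu
      · -- trace {x,y}
        have htr : E ∩ S0 = {x, y} := by
          ext u
          simp only [hS0def, mem_inter, mem_insert, mem_singleton]
          constructor
          · rintro ⟨huE, h | h | h⟩
            · exact Or.inl h
            · exact Or.inr h
            · exact absurd (h ▸ huE) hzE
          · rintro (rfl | rfl)
            · exact ⟨hxE, Or.inl rfl⟩
            · exact ⟨hyE, Or.inr (Or.inl rfl)⟩
        obtain ⟨E₂, hE₂, hd₂⟩ := hnc {x, y} (by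
          apply le_trans (card_insert_le _ _); simp)
        have hxE₂ : x ∉ E₂ := fun h => by
          have : x ∈ E₂ ∩ {x, y} := mem_inter.mpr ⟨h, by simp⟩
          rw [hd₂] at this; simp at this
        have hyE₂ : y ∉ E₂ := fun h => by
          have : y ∈ E₂ ∩ {x, y} := mem_inter.mpr ⟨h, by simp⟩
          rw [hd₂] at this; simp at this
        have htr₂ : E₂ ∩ S0 = {z} := mk_trace x y z hS0def.symm E₂ hE₂ hxE₂ hyE₂
        obtain ⟨m, hm⟩ := card_eq_one.mp (petal_card1 h3 hE hxy htr)
        obtain ⟨v, hv⟩ := meet_petal hint hE hE₂ htr₂ hzE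
        rw [mem_inter] at hv
        have hsub₂ := petal_in E₂ hE₂ z (Ne.symm hxz) htr₂
        intro u hu
        by_cases huS : u ∈ S0
        · exact mem_union_left _ huS
        · have hum : u = m := by
            have : u ∈ E \ S0 := mem_sdiff.mpr ⟨hu, huS⟩
            rw [hm] at this; simpa using this
          have hvm : v = m := by
            have : v ∈ E \ S0 := mem_sdiff.mpr ⟨hv.1, (mem_sdiff.mp hv.2).2⟩
            rw [hm] at this; simpa using this
          have huE₂ : u ∈ E₂ \ S0 := by rw [hum, ← hvm]; exact hv.2
          exact mem_union_right _ (hsub₂ huE₂)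
    · by_cases hzE : z ∈ E
      · -- trace {x,z}
        have htr : E ∩ S0 = {x, z} := by
          ext u
          simp only [hS0def, mem_inter, mem_insert, mem_singleton]
          constructor
          · rintro ⟨huE, h | h | h⟩
            · exact Or.inl h
            · exact absurd (h ▸ huE) hyE
            · exact Or.inr h
          · rintro (rfl | rfl)
            · exact ⟨hxE, Or.inl rfl⟩
            · exact ⟨hzE, Or.inr (Or.inr rfl)⟩
        obtain ⟨E₂, hE₂, hd₂⟩ := hnc {x, z} (by
          apply le_trans (card_insert_le _ _); simp)
        have hxE₂ : x ∉ E₂ := fun h => by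
          have : x ∈ E₂ ∩ {x, z} := mem_inter.mpr ⟨h, by simp⟩
          rw [hd₂] at this; simp at this
        have hzE₂ : z ∉ E₂ := fun h => by
          have : z ∈ E₂ ∩ {x, z} := mem_inter.mpr ⟨h, by simp⟩
          rw [hd₂] at this; simp at this
        have htr₂ : E₂ ∩ S0 = {y} := mk_trace x z y ((triple_perm1 x y z).trans hS0def.symm) E₂ hE₂ hxE₂ hzE₂
        obtain ⟨m, hm⟩ := card_eq_one.mp (petal_card1 h3 hE hxz htr)
        obtain ⟨v, hv⟩ := meet_petal hint hE hE₂ htr₂ hyE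
        rw [mem_inter] at hv
        have hsub₂ := petal_in E₂ hE₂ y (Ne.symm hxy) htr₂
        intro u hu
        by_cases huS : u ∈ S0
        · exact mem_union_left _ huS
        · have hum : u = m := by
            have : u ∈ E \ S0 := mem_sdiff.mpr ⟨hu, huS⟩
            rw [hm] at this; simpa using this
          have hvm : v = m := by
            have : v ∈ E \ S0 := mem_sdiff.mpr ⟨hv.1, (mem_sdiff.mp hv.2).2⟩
            rw [hm] at this; simpa using this
          have huE₂ : u ∈ E₂ \ S0 := by rw [hum, ← hvm]; exact hv.2
          exact mem_union_right _ (hsub₂ huE₂)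
      · -- trace {x} only
        have htr : E ∩ S0 = {x} := mk_trace y z x ((triple_perm2 x y z).trans hS0def.symm) E hE hyE hzE
        obtain ⟨Ey, hEy, hdy⟩ := hnc {x, z} (by
          apply le_trans (card_insert_le _ _); simp)
        have hxEy : x ∉ Ey := fun h => by
          have : x ∈ Ey ∩ {x, z} := mem_inter.mpr ⟨h, by simp⟩
          rw [hdy] at this; simp at this
        have hzEy : z ∉ Ey := fun h => by
          have : z ∈ Ey ∩ {x, z} := mem_inter.mpr ⟨h, by simp⟩
          rw [hdy] at this; simp at this
        have htry : Ey ∩ S0 = {y} := mk_trace x z y ((triple_perm1 x y z).trans hS0def.symm) Ey hEy hxEy hzEy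
        obtain ⟨v, hv⟩ := meet_petal hint hE hEy htry hyE
        rw [mem_inter] at hv
        have hvef : v ∈ e ∪ f := petal_in Ey hEy y (Ne.symm hxy) htry hv.2
        have hvS0 : v ∉ S0 := (mem_sdiff.mp hv.2).2
        intro u hu
        by_cases huS : u ∈ S0
        · exact mem_union_left _ huS
        by_cases huef : u ∈ e ∪ f
        · exact mem_union_right _ huef
        exfalso
        have huv : u ≠ v := fun h => huef (h ▸ hvef)
        have hEs : ({u, v} : Finset ℕ) = E \ S0 := by
          apply Finset.eq_of_subset_of_card_le
          · exact insert_subset (mem_sdiff.mpr ⟨hu, huS⟩)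
              (singleton_subset_iff.mpr (mem_sdiff.mpr ⟨hv.1, hvS0⟩))
          · rw [card_insert_of_notMem (by simp [huv]), card_singleton,
              petal_card h3 hE htr]
        obtain ⟨E', hE', hd'⟩ := hnc {x, v} (by
          apply le_trans (card_insert_le _ _); simp)
        have hxE' : x ∉ E' := fun h => by
          have : x ∈ E' ∩ {x, v} := mem_inter.mpr ⟨h, by simp⟩
          rw [hd'] at this; simp at this
        have hvE' : v ∉ E' := fun h => by
          have : v ∈ E' ∩ {x, v} := mem_inter.mpr ⟨h, by simp⟩
          rw [hd'] at this; simp at this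
        have hw' : ∃ w', w' ≠ x ∧ E' ∩ S0 = {w'} := by
          by_cases hyE' : y ∈ E'
          · by_cases hzE' : z ∈ E'
            · exfalso
              apply no_yz E' hE'
              ext u'
              simp only [hS0def, mem_inter, mem_insert, mem_singleton]
              constructor
              · rintro ⟨hu'E, h | h | h⟩
                · exact absurd (h ▸ hu'E) hxE'
                · exact Or.inl h
                · exact Or.inr h
              · rintro (rfl | rfl)
                · exact ⟨hyE', Or.inr (Or.inl rfl)⟩
                · exact ⟨hzE', Or.inr (Or.inr rfl)⟩
            · exact ⟨y, Ne.symm hxy, mk_trace x z y ((triple_perm1 x y z).trans hS0def.symm) E' hE' hxE' hzE'⟩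
          · by_cases hzE' : z ∈ E'
            · exact ⟨z, Ne.symm hxz, mk_trace x y z hS0def.symm E' hE' hxE' hyE'⟩
            · exfalso
              obtain ⟨v', hv'⟩ := trace_nonempty E' hE'
              rw [mem_inter] at hv'
              have := hv'.2
              simp only [hS0def, mem_insert, mem_singleton] at this
              rcases this with rfl | rfl | rfl
              · exact hxE' hv'.1
              · exact hyE' hv'.1
              · exact hzE' hv'.1
        obtain ⟨w', hw'x, htr'⟩ := hw'
        have hsub' : E' \ S0 ⊆ e ∪ f := petal_in E' hE' w' hw'x htr'
        obtain ⟨t, ht⟩ := hint E hE E' hE'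
        rw [mem_inter] at ht
        have htS0 : t ∉ S0 := by
          intro htS
          have : t ∈ E ∩ S0 := mem_inter.mpr ⟨ht.1, htS⟩
          rw [htr] at this
          simp only [mem_singleton] at this
          exact hxE' (this ▸ ht.2)
        have : t ∈ E \ S0 := mem_sdiff.mpr ⟨ht.1, htS0⟩
        rw [← hEs] at this
        simp only [mem_insert, mem_singleton] at this
        rcases this with rfl | rfl
        · exact huef (hsub' (mem_sdiff.mpr ⟨ht.2, htS0⟩))
        · exact hvE' ht.2
  · -- x ∉ E
    obtain ⟨v, hv⟩ := meet_petal hint hE hEe htre hxE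
    obtain ⟨v', hv'⟩ := meet_petal hint hE hEf htrf hxE
    rw [mem_inter] at hv hv'
    have hvv : v ≠ v' := by
      intro hvveq
      have : v ∈ e ∩ f := mem_inter.mpr ⟨hv.2, hvveq ▸ hv'.2⟩
      rw [hdisj] at this; simp at this
    have hc2 : (E \ S0).card ≤ 2 := by
      have h := Finset.card_inter_add_card_sdiff E S0
      have h1 : 1 ≤ (E ∩ S0).card := card_pos.mpr (trace_nonempty E hE)
      have h2 := h3 E hE
      omega
    have hEs : ({v, v'} : Finset ℕ) = E \ S0 := by
      apply Finset.eq_of_subset_of_card_le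
      · exact insert_subset (mem_sdiff.mpr ⟨hv.1, (mem_sdiff.mp hv.2).2⟩)
          (singleton_subset_iff.mpr (mem_sdiff.mpr ⟨hv'.1, (mem_sdiff.mp hv'.2).2⟩))
      · rw [card_insert_of_notMem (by simp [hvv]), card_singleton]
        exact hc2
    intro u hu
    by_cases huS : u ∈ S0
    · exact mem_union_left _ huS
    · have : u ∈ E \ S0 := mem_sdiff.mpr ⟨hu, huS⟩
      rw [← hEs] at this
      simp only [mem_insert, mem_singleton] at this
      rcases this with rfl | rfl
      · exact mem_union_right _ (mem_union_left _ hv.2)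
      · exact mem_union_right _ (mem_union_right _ hv'.2)

end Claim7

lemma pair_card_le (p q : ℕ) : ({p, q} : Finset ℕ).card ≤ 2 := by
  have := card_insert_le p ({q} : Finset ℕ)
  simp at this ⊢
  omega

lemma caseP (H : Finset (Finset ℕ)) (h3 : ∀ S ∈ H, S.card = 3)
    (hint : ∀ S ∈ H, ∀ T ∈ H, (S ∩ T).Nonempty)
    (hnc : ∀ T : Finset ℕ, T.card ≤ 2 → ∃ S ∈ H, S ∩ T = ∅)
    (x y z : ℕ) (hxy : x ≠ y) (hxz : x ≠ z) (hyz : y ≠ z)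
    (hS0 : ({x, y, z} : Finset ℕ) ∈ H)
    (hND : ∀ w : ℕ, ∀ Ea ∈ H, ∀ Eb ∈ H, Ea ∩ {x, y, z} = {w} → Eb ∩ {x, y, z} = {w} →
      ((Ea \ {x, y, z}) ∩ (Eb \ {x, y, z})).Nonempty)
    (Ee Ef : Finset ℕ) (hEe : Ee ∈ H) (hEf : Ef ∈ H)
    (htre : Ee ∩ {x, y, z} = {x}) (htrf : Ef ∩ {x, y, z} = {x})
    (hne : Ee \ {x, y, z} ≠ Ef \ {x, y, z}) :
    ∃ W : Finset ℕ, W.card ≤ 7 ∧ ∀ E ∈ H, E ⊆ W := by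
  set S0 : Finset ℕ := {x, y, z} with hS0def
  set e : Finset ℕ := Ee \ S0 with hedef
  set f : Finset ℕ := Ef \ S0 with hfdef
  have hecard : e.card = 2 := petal_card h3 hEe htre
  have hfcard : f.card = 2 := petal_card h3 hEf htrf
  have trace_nonempty : ∀ E ∈ H, (E ∩ S0).Nonempty := fun E hE => hint E hE S0 hS0
  have mk_trace : ∀ a b c : ℕ, ({a, b, c} : Finset ℕ) = S0 → ∀ E' ∈ H,
      a ∉ E' → b ∉ E' → E' ∩ S0 = {c} := by
    intro a b c habc E' hE' ha hb
    have hne' := trace_nonempty E' hE'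
    have hcE' : c ∈ E' := by
      obtain ⟨v, hv⟩ := hne'
      rw [mem_inter, ← habc] at hv
      simp only [mem_insert, mem_singleton] at hv
      rcases hv.2 with h | h | h
      · exact absurd (h ▸ hv.1) ha
      · exact absurd (h ▸ hv.1) hb
      · exact h ▸ hv.1
    ext u
    simp only [mem_inter, mem_singleton]
    constructor
    · rintro ⟨huE, huS⟩
      rw [← habc] at huS
      simp only [mem_insert, mem_singleton] at huS
      rcases huS with h | h | h
      · exact absurd (h ▸ huE) ha
      · exact absurd (h ▸ huE) hb
      · exact h
    · rintro rfl
      exact ⟨hcE', by rw [← habc]; simp⟩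
  obtain ⟨π, hπ⟩ := hND x Ee hEe Ef hEf htre htrf
  rw [mem_inter] at hπ
  have hs : ∃ s, s ≠ π ∧ e = {π, s} := by
    obtain ⟨a, b, hab, habe⟩ := card_eq_two.mp hecard
    have hπab : π ∈ ({a, b} : Finset ℕ) := habe ▸ hπ.1
    simp only [mem_insert, mem_singleton] at hπab
    rcases hπab with rfl | rfl
    · exact ⟨b, Ne.symm hab, habe⟩
    · exact ⟨a, hab, by rw [habe, pair_comm]⟩
  obtain ⟨s, hsπ, hes⟩ := hs
  have ht : ∃ t, t ≠ π ∧ f = {π, t} := by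
    obtain ⟨a, b, hab, habf⟩ := card_eq_two.mp hfcard
    have hπab : π ∈ ({a, b} : Finset ℕ) := habf ▸ hπ.2
    simp only [mem_insert, mem_singleton] at hπab
    rcases hπab with rfl | rfl
    · exact ⟨b, Ne.symm hab, habf⟩
    · exact ⟨a, hab, by rw [habf, pair_comm]⟩
  obtain ⟨t, htπ, hft⟩ := ht
  have hst : s ≠ t := by
    rintro rfl
    exact hne (hes.trans hft.symm)
  have hef_inter : e ∩ f = {π} := by
    ext u
    simp only [hes, hft, mem_inter, mem_insert, mem_singleton]
    constructor
    · rintro ⟨h1 | h1, h2 | h2⟩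
      · exact h1
      · exact h1
      · exact h2
      · exact absurd (h1.symm.trans h2) hst
    · rintro rfl; exact ⟨Or.inl rfl, Or.inl rfl⟩
  have hπS0 : π ∉ S0 := (mem_sdiff.mp hπ.1).2
  have hsS0 : s ∉ S0 := by
    have : s ∈ e := by rw [hes]; simp
    exact (mem_sdiff.mp this).2
  have htS0 : t ∉ S0 := by
    have : t ∈ f := by rw [hft]; simp
    exact (mem_sdiff.mp this).2
  have hyz_petal : ∀ E' ∈ H, E' ∩ S0 = {y, z} → E' \ S0 = {π} := by
    intro E' hE' htr'
    have hx' : x ∉ E' := by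
      intro hx'
      have : x ∈ E' ∩ S0 := mem_inter.mpr ⟨hx', by simp [hS0def]⟩
      rw [htr'] at this
      simp only [mem_insert, mem_singleton] at this
      tauto
    obtain ⟨m, hm⟩ := card_eq_one.mp (petal_card1 h3 hE' hyz htr')
    obtain ⟨v, hv⟩ := meet_petal hint hE' hEe htre hx'
    obtain ⟨v', hv'⟩ := meet_petal hint hE' hEf htrf hx'
    rw [mem_inter] at hv hv'
    have hvm : v = m := by
      have : v ∈ E' \ S0 := mem_sdiff.mpr ⟨hv.1, (mem_sdiff.mp hv.2).2⟩
      rw [hm] at this; simpa using this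
    have hv'm : v' = m := by
      have : v' ∈ E' \ S0 := mem_sdiff.mpr ⟨hv'.1, (mem_sdiff.mp hv'.2).2⟩
      rw [hm] at this; simpa using this
    have : m ∈ e ∩ f := mem_inter.mpr ⟨hvm ▸ hv.2, hv'm ▸ hv'.2⟩
    rw [hef_inter] at this
    simp only [mem_singleton] at this
    rw [hm, this]
  obtain ⟨E₀, hE₀, hd₀⟩ := hnc {x, π} (pair_card_le x π)
  have hxE₀ : x ∉ E₀ := fun h => by
    have : x ∈ E₀ ∩ {x, π} := mem_inter.mpr ⟨h, by simp⟩
    rw [hd₀] at this; simp at this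
  have hπE₀ : π ∉ E₀ := fun h => by
    have : π ∈ E₀ ∩ {x, π} := mem_inter.mpr ⟨h, by simp⟩
    rw [hd₀] at this; simp at this
  have hw₀ : ∃ w₀, w₀ ≠ x ∧ E₀ ∩ S0 = {w₀} := by
    by_cases hyE₀ : y ∈ E₀
    · by_cases hzE₀ : z ∈ E₀
      · exfalso
        have htr₀' : E₀ ∩ S0 = {y, z} := by
          ext u
          simp only [hS0def, mem_inter, mem_insert, mem_singleton]
          constructor
          · rintro ⟨huE, h | h | h⟩
            · exact absurd (h ▸ huE) hxE₀
            · exact Or.inl h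
            · exact Or.inr h
          · rintro (rfl | rfl)
            · exact ⟨hyE₀, Or.inr (Or.inl rfl)⟩
            · exact ⟨hzE₀, Or.inr (Or.inr rfl)⟩
        have := hyz_petal E₀ hE₀ htr₀'
        have hπE : π ∈ E₀ \ S0 := by rw [this]; simp
        exact hπE₀ (mem_sdiff.mp hπE).1
      · exact ⟨y, Ne.symm hxy, mk_trace x z y ((triple_perm1 x y z).trans hS0def.symm) E₀ hE₀ hxE₀ hzE₀⟩
    · by_cases hzE₀ : z ∈ E₀
      · exact ⟨z, Ne.symm hxz, mk_trace x y z hS0def.symm E₀ hE₀ hxE₀ hyE₀⟩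
      · exfalso
        obtain ⟨v', hv'⟩ := trace_nonempty E₀ hE₀
        rw [mem_inter] at hv'
        have := hv'.2
        simp only [hS0def, mem_insert, mem_singleton] at this
        rcases this with rfl | rfl | rfl
        · exact hxE₀ hv'.1
        · exact hyE₀ hv'.1
        · exact hzE₀ hv'.1
  obtain ⟨w₀, hw₀x, htr₀⟩ := hw₀
  have hπg₀ : π ∉ E₀ \ S0 := fun h => hπE₀ (mem_sdiff.mp h).1
  have hsg₀ : s ∈ E₀ \ S0 := by
    obtain ⟨v, hv⟩ := cross_petal hint hE₀ hEe htr₀ htre hw₀x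
    rw [mem_inter] at hv
    have : v ∈ ({π, s} : Finset ℕ) := hes ▸ hv.2
    simp only [mem_insert, mem_singleton] at this
    rcases this with rfl | rfl
    · exact absurd hv.1 hπg₀
    · exact hv.1
  have htg₀ : t ∈ E₀ \ S0 := by
    obtain ⟨v, hv⟩ := cross_petal hint hE₀ hEf htr₀ htrf hw₀x
    rw [mem_inter] at hv
    have : v ∈ ({π, t} : Finset ℕ) := hft ▸ hv.2
    simp only [mem_insert, mem_singleton] at this
    rcases this with rfl | rfl
    · exact absurd hv.1 hπg₀
    · exact hv.1
  have hg₀ : E₀ \ S0 = {s, t} := by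
    apply (Finset.eq_of_subset_of_card_le
      (insert_subset hsg₀ (singleton_subset_iff.mpr htg₀)) ?_).symm
    rw [card_insert_of_notMem (by simp [hst]), card_singleton,
      petal_card h3 hE₀ htr₀]
  have keyTri : ∀ E' ∈ H, ∀ w', E' ∩ S0 = {w'} → E' \ S0 ⊆ {π, s, t} := by
    intro E' hE' w' htr'
    have he' : ((E' \ S0) ∩ e).Nonempty := by
      rcases eq_or_ne w' x with rfl | hwx
      · exact hND w' E' hE' Ee hEe htr' htre
      · exact cross_petal hint hE' hEe htr' htre hwx
    have hf' : ((E' \ S0) ∩ f).Nonempty := by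
      rcases eq_or_ne w' x with rfl | hwx
      · exact hND w' E' hE' Ef hEf htr' htrf
      · exact cross_petal hint hE' hEf htr' htrf hwx
    have hg' : ((E' \ S0) ∩ (E₀ \ S0)).Nonempty := by
      rcases eq_or_ne w' w₀ with rfl | hww
      · exact hND w' E' hE' E₀ hE₀ htr' htr₀
      · exact cross_petal hint hE' hE₀ htr' htr₀ hww
    intro u hu
    by_contra huΘ
    have hcard : ((E' \ S0) \ {u}).card = 1 := by
      rw [card_sdiff_of_subset (singleton_subset_iff.mpr hu), petal_card h3 hE' htr',
        card_singleton]
    obtain ⟨w'', hw''⟩ := card_eq_one.mp hcard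
    obtain ⟨v1, hv1⟩ := he'
    obtain ⟨v2, hv2⟩ := hf'
    obtain ⟨v3, hv3⟩ := hg'
    rw [mem_inter] at hv1 hv2 hv3
    have hv1Θ : v1 ∈ ({π, s} : Finset ℕ) := hes ▸ hv1.2
    have hv2Θ : v2 ∈ ({π, t} : Finset ℕ) := hft ▸ hv2.2
    have hv3Θ : v3 ∈ ({s, t} : Finset ℕ) := hg₀ ▸ hv3.2
    simp only [mem_insert, mem_singleton] at hv1Θ hv2Θ hv3Θ
    have hne1 : v1 ≠ u := by
      intro hequ
      apply huΘ
      rw [← hequ]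
      rcases hv1Θ with rfl | rfl <;> simp
    have hne2 : v2 ≠ u := by
      intro hequ
      apply huΘ
      rw [← hequ]
      rcases hv2Θ with rfl | rfl <;> simp
    have hne3 : v3 ≠ u := by
      intro hequ
      apply huΘ
      rw [← hequ]
      rcases hv3Θ with rfl | rfl <;> simp
    have hv1w : v1 = w'' := by
      have : v1 ∈ (E' \ S0) \ {u} := mem_sdiff.mpr ⟨hv1.1, by simp [hne1]⟩
      rw [hw''] at this; simpa using this
    have hv2w : v2 = w'' := by
      have : v2 ∈ (E' \ S0) \ {u} := mem_sdiff.mpr ⟨hv2.1, by simp [hne2]⟩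
      rw [hw''] at this; simpa using this
    have hv3w : v3 = w'' := by
      have : v3 ∈ (E' \ S0) \ {u} := mem_sdiff.mpr ⟨hv3.1, by simp [hne3]⟩
      rw [hw''] at this; simpa using this
    subst hv1w; subst hv2w; subst hv3w
    rcases hv1Θ with rfl | rfl
    · rcases hv3Θ with h | h
      · exact hsπ h.symm
      · exact htπ h.symm
    · rcases hv2Θ with h | h
      · exact hsπ h
      · exact hst h
  refine ⟨S0 ∪ {π, s, t}, ?_, ?_⟩
  · have a0 := card_union_le S0 ({π, s, t} : Finset ℕ)
    have a2 := card_insert_le x ({y, z} : Finset ℕ)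
    have a3 := card_insert_le y ({z} : Finset ℕ)
    have a4 : ({z} : Finset ℕ).card = 1 := card_singleton z
    have a5 : S0.card ≤ 3 := by rw [hS0def]; omega
    have b2 := card_insert_le π ({s, t} : Finset ℕ)
    have b3 := card_insert_le s ({t} : Finset ℕ)
    have b4 : ({t} : Finset ℕ).card = 1 := card_singleton t
    omega
  intro E hE
  by_cases hxE : x ∈ E
  · by_cases hyE : y ∈ E
    · by_cases hzE : z ∈ E
      · have hsub : S0 ⊆ E := by
          intro u hu
          simp only [hS0def, mem_insert, mem_singleton] at hu
          rcases hu with rfl | rfl | rfl <;> assumption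
        have heq := Finset.eq_of_subset_of_card_le hsub
          (by rw [h3 E hE, h3 S0 hS0])
        intro u hu
        rw [← heq] at hu
        exact mem_union_left _ hu
      · -- trace {x,y}
        have htr : E ∩ S0 = {x, y} := by
          ext u
          simp only [hS0def, mem_inter, mem_insert, mem_singleton]
          constructor
          · rintro ⟨huE, h | h | h⟩
            · exact Or.inl h
            · exact Or.inr h
            · exact absurd (h ▸ huE) hzE
          · rintro (rfl | rfl)
            · exact ⟨hxE, Or.inl rfl⟩
            · exact ⟨hyE, Or.inr (Or.inl rfl)⟩
        obtain ⟨E₂, hE₂, hd₂⟩ := hnc {x, y} (pair_card_le x y)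
        have hxE₂ : x ∉ E₂ := fun h => by
          have : x ∈ E₂ ∩ {x, y} := mem_inter.mpr ⟨h, by simp⟩
          rw [hd₂] at this; simp at this
        have hyE₂ : y ∉ E₂ := fun h => by
          have : y ∈ E₂ ∩ {x, y} := mem_inter.mpr ⟨h, by simp⟩
          rw [hd₂] at this; simp at this
        have htr₂ : E₂ ∩ S0 = {z} := mk_trace x y z hS0def.symm E₂ hE₂ hxE₂ hyE₂
        obtain ⟨m, hm⟩ := card_eq_one.mp (petal_card1 h3 hE hxy htr)
        obtain ⟨v, hv⟩ := meet_petal hint hE hE₂ htr₂ hzE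
        rw [mem_inter] at hv
        have hsub₂ := keyTri E₂ hE₂ z htr₂
        intro u hu
        by_cases huS : u ∈ S0
        · exact mem_union_left _ huS
        · have hum : u = m := by
            have : u ∈ E \ S0 := mem_sdiff.mpr ⟨hu, huS⟩
            rw [hm] at this; simpa using this
          have hvm : v = m := by
            have : v ∈ E \ S0 := mem_sdiff.mpr ⟨hv.1, (mem_sdiff.mp hv.2).2⟩
            rw [hm] at this; simpa using this
          have huE₂ : u ∈ E₂ \ S0 := by rw [hum, ← hvm]; exact hv.2
          exact mem_union_right _ (hsub₂ huE₂)
    · by_cases hzE : z ∈ E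
      · -- trace {x,z}
        have htr : E ∩ S0 = {x, z} := by
          ext u
          simp only [hS0def, mem_inter, mem_insert, mem_singleton]
          constructor
          · rintro ⟨huE, h | h | h⟩
            · exact Or.inl h
            · exact absurd (h ▸ huE) hyE
            · exact Or.inr h
          · rintro (rfl | rfl)
            · exact ⟨hxE, Or.inl rfl⟩
            · exact ⟨hzE, Or.inr (Or.inr rfl)⟩
        obtain ⟨E₂, hE₂, hd₂⟩ := hnc {x, z} (pair_card_le x z)
        have hxE₂ : x ∉ E₂ := fun h => by
          have : x ∈ E₂ ∩ {x, z} := mem_inter.mpr ⟨h, by simp⟩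
          rw [hd₂] at this; simp at this
        have hzE₂ : z ∉ E₂ := fun h => by
          have : z ∈ E₂ ∩ {x, z} := mem_inter.mpr ⟨h, by simp⟩
          rw [hd₂] at this; simp at this
        have htr₂ : E₂ ∩ S0 = {y} := mk_trace x z y ((triple_perm1 x y z).trans hS0def.symm) E₂ hE₂ hxE₂ hzE₂
        obtain ⟨m, hm⟩ := card_eq_one.mp (petal_card1 h3 hE hxz htr)
        obtain ⟨v, hv⟩ := meet_petal hint hE hE₂ htr₂ hyE
        rw [mem_inter] at hv
        have hsub₂ := keyTri E₂ hE₂ y htr₂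
        intro u hu
        by_cases huS : u ∈ S0
        · exact mem_union_left _ huS
        · have hum : u = m := by
            have : u ∈ E \ S0 := mem_sdiff.mpr ⟨hu, huS⟩
            rw [hm] at this; simpa using this
          have hvm : v = m := by
            have : v ∈ E \ S0 := mem_sdiff.mpr ⟨hv.1, (mem_sdiff.mp hv.2).2⟩
            rw [hm] at this; simpa using this
          have huE₂ : u ∈ E₂ \ S0 := by rw [hum, ← hvm]; exact hv.2
          exact mem_union_right _ (hsub₂ huE₂)
      · -- trace {x}
        have htr : E ∩ S0 = {x} := mk_trace y z x ((triple_perm2 x y z).trans hS0def.symm) E hE hyE hzE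
        have hsub' := keyTri E hE x htr
        intro u hu
        by_cases huS : u ∈ S0
        · exact mem_union_left _ huS
        · exact mem_union_right _ (hsub' (mem_sdiff.mpr ⟨hu, huS⟩))
  · by_cases hyE : y ∈ E
    · by_cases hzE : z ∈ E
      · -- trace {y,z}
        have htr : E ∩ S0 = {y, z} := by
          ext u
          simp only [hS0def, mem_inter, mem_insert, mem_singleton]
          constructor
          · rintro ⟨huE, h | h | h⟩
            · exact absurd (h ▸ huE) hxE
            · exact Or.inl h
            · exact Or.inr h
          · rintro (rfl | rfl)
            · exact ⟨hyE, Or.inr (Or.inl rfl)⟩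
            · exact ⟨hzE, Or.inr (Or.inr rfl)⟩
        have hp := hyz_petal E hE htr
        intro u hu
        by_cases huS : u ∈ S0
        · exact mem_union_left _ huS
        · have : u ∈ E \ S0 := mem_sdiff.mpr ⟨hu, huS⟩
          rw [hp] at this
          simp only [mem_singleton] at this
          subst this
          exact mem_union_right _ (by simp)
      · -- trace {y}
        have htr : E ∩ S0 = {y} := mk_trace x z y ((triple_perm1 x y z).trans hS0def.symm) E hE hxE hzE
        have hsub' := keyTri E hE y htr
        intro u hu
        by_cases huS : u ∈ S0
        · exact mem_union_left _ huS
        · exact mem_union_right _ (hsub' (mem_sdiff.mpr ⟨hu, huS⟩))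
    · by_cases hzE : z ∈ E
      · -- trace {z}
        have htr : E ∩ S0 = {z} := mk_trace x y z hS0def.symm E hE hxE hyE
        have hsub' := keyTri E hE z htr
        intro u hu
        by_cases huS : u ∈ S0
        · exact mem_union_left _ huS
        · exact mem_union_right _ (hsub' (mem_sdiff.mpr ⟨hu, huS⟩))
      · exfalso
        obtain ⟨v', hv'⟩ := trace_nonempty E hE
        rw [mem_inter] at hv'
        have := hv'.2
        simp only [hS0def, mem_insert, mem_singleton] at this
        rcases this with rfl | rfl | rfl
        · exact hxE hv'.1
        · exact hyE hv'.1
        · exact hzE hv'.1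

theorem claim7 (H : Finset (Finset ℕ)) (h3 : ∀ S ∈ H, S.card = 3)
    (hint : ∀ S ∈ H, ∀ T ∈ H, (S ∩ T).Nonempty)
    (hnc : ∀ T : Finset ℕ, T.card ≤ 2 → ∃ S ∈ H, S ∩ T = ∅) :
    ∃ W : Finset ℕ, W.card ≤ 7 ∧ ∀ S ∈ H, S ⊆ W := by
  obtain ⟨S0, hS0, -⟩ := hnc ∅ (by simp)
  obtain ⟨x, y, z, hxy, hxz, hyz, hS0eq⟩ := Finset.card_eq_three.mp (h3 S0 hS0)
  subst hS0eq
  by_cases hA : ∃ w, ∃ Ea ∈ H, ∃ Eb ∈ H, Ea ∩ {x, y, z} = {w} ∧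
      Eb ∩ {x, y, z} = {w} ∧ (Ea \ {x, y, z}) ∩ (Eb \ {x, y, z}) = ∅
  · obtain ⟨w, Ea, hEa, Eb, hEb, hta, htb, hd⟩ := hA
    have hwS : w ∈ ({x, y, z} : Finset ℕ) := by
      have : w ∈ Ea ∩ {x, y, z} := hta ▸ mem_singleton_self w
      exact (mem_inter.mp this).2
    have hp2 : ({y, z, x} : Finset ℕ) = {x, y, z} := triple_perm2 x y z
    have hp3 : ({z, x, y} : Finset ℕ) = {x, y, z} :=
      (triple_perm2 y z x).trans (triple_perm2 x y z)
    simp only [mem_insert, mem_singleton] at hwS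
    rcases hwS with rfl | rfl | rfl
    · exact caseA H h3 hint hnc w y z hxy hxz hyz hS0 Ea Eb hEa hEb hta htb hd
    · exact caseA H h3 hint hnc w z x hyz (Ne.symm hxy) (Ne.symm hxz)
        (by rw [hp2]; exact hS0) Ea Eb hEa hEb
        (by rw [hp2]; exact hta) (by rw [hp2]; exact htb) (by rw [hp2]; exact hd)
    · exact caseA H h3 hint hnc w x y (Ne.symm hxz) (Ne.symm hyz) hxy
        (by rw [hp3]; exact hS0) Ea Eb hEa hEb
        (by rw [hp3]; exact hta) (by rw [hp3]; exact htb) (by rw [hp3]; exact hd)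
  · push_neg at hA
    have hND : ∀ w, ∀ Ea ∈ H, ∀ Eb ∈ H, Ea ∩ {x, y, z} = {w} →
        Eb ∩ {x, y, z} = {w} →
        ((Ea \ {x, y, z}) ∩ (Eb \ {x, y, z})).Nonempty := by
      intro w Ea hEa Eb hEb hta htb
      exact hA w Ea hEa Eb hEb hta htb
    by_cases hP : ∃ w, ∃ Ea ∈ H, ∃ Eb ∈ H, Ea ∩ {x, y, z} = {w} ∧
        Eb ∩ {x, y, z} = {w} ∧ Ea \ {x, y, z} ≠ Eb \ {x, y, z}
    · obtain ⟨w, Ea, hEa, Eb, hEb, hta, htb, hd⟩ := hP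
      have hwS : w ∈ ({x, y, z} : Finset ℕ) := by
        have : w ∈ Ea ∩ {x, y, z} := hta ▸ mem_singleton_self w
        exact (mem_inter.mp this).2
      have hp2 : ({y, z, x} : Finset ℕ) = {x, y, z} := triple_perm2 x y z
      have hp3 : ({z, x, y} : Finset ℕ) = {x, y, z} :=
        (triple_perm2 y z x).trans (triple_perm2 x y z)
      simp only [mem_insert, mem_singleton] at hwS
      rcases hwS with rfl | rfl | rfl
      · exact caseP H h3 hint hnc w y z hxy hxz hyz hS0 hND Ea Eb hEa hEb hta htb hd
      · exact caseP H h3 hint hnc w z x hyz (Ne.symm hxy) (Ne.symm hxz)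
          (by rw [hp2]; exact hS0) (by rw [hp2]; exact hND) Ea Eb hEa hEb
          (by rw [hp2]; exact hta) (by rw [hp2]; exact htb) (by rw [hp2]; exact hd)
      · exact caseP H h3 hint hnc w x y (Ne.symm hxz) (Ne.symm hyz) hxy
          (by rw [hp3]; exact hS0) (by rw [hp3]; exact hND) Ea Eb hEa hEb
          (by rw [hp3]; exact hta) (by rw [hp3]; exact htb) (by rw [hp3]; exact hd)
    · push_neg at hP
      -- caseS : all petals at each trace vertex coincide
      set S0 : Finset ℕ := {x, y, z} with hS0def
      have trace_nonempty : ∀ E ∈ H, (E ∩ S0).Nonempty := fun E hE => hint E hE S0 hS0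
      have mk_trace : ∀ a b c : ℕ, ({a, b, c} : Finset ℕ) = S0 → ∀ E' ∈ H,
          a ∉ E' → b ∉ E' → E' ∩ S0 = {c} := by
        intro a b c habc E' hE' ha hb
        have hne' := trace_nonempty E' hE'
        have hcE' : c ∈ E' := by
          obtain ⟨v, hv⟩ := hne'
          rw [mem_inter, ← habc] at hv
          simp only [mem_insert, mem_singleton] at hv
          rcases hv.2 with h | h | h
          · exact absurd (h ▸ hv.1) ha
          · exact absurd (h ▸ hv.1) hb
          · exact h ▸ hv.1
        ext u
        simp only [mem_inter, mem_singleton]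
        constructor
        · rintro ⟨huE, huS⟩
          rw [← habc] at huS
          simp only [mem_insert, mem_singleton] at huS
          rcases huS with h | h | h
          · exact absurd (h ▸ huE) ha
          · exact absurd (h ▸ huE) hb
          · exact h
        · rintro rfl
          exact ⟨hcE', by rw [← habc]; simp⟩
      obtain ⟨Ex, hEx, hdx⟩ := hnc {y, z} (pair_card_le y z)
      have hyEx : y ∉ Ex := fun h => by
        have : y ∈ Ex ∩ {y, z} := mem_inter.mpr ⟨h, by simp⟩
        rw [hdx] at this; simp at this
      have hzEx : z ∉ Ex := fun h => by
        have : z ∈ Ex ∩ {y, z} := mem_inter.mpr ⟨h, by simp⟩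
        rw [hdx] at this; simp at this
      have htrx : Ex ∩ S0 = {x} :=
        mk_trace y z x ((triple_perm2 x y z).trans hS0def.symm) Ex hEx hyEx hzEx
      obtain ⟨Ey, hEy, hdy⟩ := hnc {x, z} (pair_card_le x z)
      have hxEy : x ∉ Ey := fun h => by
        have : x ∈ Ey ∩ {x, z} := mem_inter.mpr ⟨h, by simp⟩
        rw [hdy] at this; simp at this
      have hzEy : z ∉ Ey := fun h => by
        have : z ∈ Ey ∩ {x, z} := mem_inter.mpr ⟨h, by simp⟩
        rw [hdy] at this; simp at this
      have htry : Ey ∩ S0 = {y} :=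
        mk_trace x z y ((triple_perm1 x y z).trans hS0def.symm) Ey hEy hxEy hzEy
      obtain ⟨Ez, hEz, hdz⟩ := hnc {x, y} (pair_card_le x y)
      have hxEz : x ∉ Ez := fun h => by
        have : x ∈ Ez ∩ {x, y} := mem_inter.mpr ⟨h, by simp⟩
        rw [hdz] at this; simp at this
      have hyEz : y ∉ Ez := fun h => by
        have : y ∈ Ez ∩ {x, y} := mem_inter.mpr ⟨h, by simp⟩
        rw [hdz] at this; simp at this
      have htrz : Ez ∩ S0 = {z} := mk_trace x y z hS0def.symm Ez hEz hxEz hyEz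
      set ex : Finset ℕ := Ex \ S0 with hexdef
      set ey : Finset ℕ := Ey \ S0 with heydef
      set ez : Finset ℕ := Ez \ S0 with hezdef
      have hexcard : ex.card = 2 := petal_card h3 hEx htrx
      have heycard : ey.card = 2 := petal_card h3 hEy htry
      have hezcard : ez.card = 2 := petal_card h3 hEz htrz
      have hibxy : (ex ∩ ey).Nonempty := cross_petal hint hEx hEy htrx htry hxy
      have hibxz : (ex ∩ ez).Nonempty := cross_petal hint hEx hEz htrx htrz hxz
      refine ⟨S0 ∪ (ex ∪ ey ∪ ez), ?_, ?_⟩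
      · have a0 := card_union_le S0 (ex ∪ ey ∪ ez)
        have a1 := Finset.card_union_add_card_inter ex ey
        have a2 := Finset.card_union_add_card_inter (ex ∪ ey) ez
        have a3 : 1 ≤ (ex ∩ ey).card := card_pos.mpr hibxy
        have a4 : 1 ≤ ((ex ∪ ey) ∩ ez).card := by
          apply card_pos.mpr
          obtain ⟨v, hv⟩ := hibxz
          rw [mem_inter] at hv
          exact ⟨v, mem_inter.mpr ⟨mem_union_left _ hv.1, hv.2⟩⟩
        have b2 := card_insert_le x ({y, z} : Finset ℕ)
        have b3 := card_insert_le y ({z} : Finset ℕ)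
        have b4 : ({z} : Finset ℕ).card = 1 := card_singleton z
        have a5 : S0.card ≤ 3 := by rw [hS0def]; omega
        omega
      intro E hE
      by_cases hxE : x ∈ E
      · by_cases hyE : y ∈ E
        · by_cases hzE : z ∈ E
          · have hsub : S0 ⊆ E := by
              intro u hu
              simp only [hS0def, mem_insert, mem_singleton] at hu
              rcases hu with rfl | rfl | rfl <;> assumption
            have heq := Finset.eq_of_subset_of_card_le hsub
              (by rw [h3 E hE, h3 S0 hS0])
            intro u hu
            rw [← heq] at hu
            exact mem_union_left _ hu
          · -- trace {x,y} : petal elt in ez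
            have htr : E ∩ S0 = {x, y} := by
              ext u
              simp only [hS0def, mem_inter, mem_insert, mem_singleton]
              constructor
              · rintro ⟨huE, h | h | h⟩
                · exact Or.inl h
                · exact Or.inr h
                · exact absurd (h ▸ huE) hzE
              · rintro (rfl | rfl)
                · exact ⟨hxE, Or.inl rfl⟩
                · exact ⟨hyE, Or.inr (Or.inl rfl)⟩
            obtain ⟨m, hm⟩ := card_eq_one.mp (petal_card1 h3 hE hxy htr)
            obtain ⟨v, hv⟩ := meet_petal hint hE hEz htrz hzE
            rw [mem_inter] at hv
            intro u hu
            by_cases huS : u ∈ S0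
            · exact mem_union_left _ huS
            · have hum : u = m := by
                have : u ∈ E \ S0 := mem_sdiff.mpr ⟨hu, huS⟩
                rw [hm] at this; simpa using this
              have hvm : v = m := by
                have : v ∈ E \ S0 := mem_sdiff.mpr ⟨hv.1, (mem_sdiff.mp hv.2).2⟩
                rw [hm] at this; simpa using this
              have : u ∈ ez := by rw [hum, ← hvm]; exact hv.2
              exact mem_union_right _ (mem_union_right _ this)
        · by_cases hzE : z ∈ E
          · -- trace {x,z} : petal elt in ey
            have htr : E ∩ S0 = {x, z} := by
              ext u
              simp only [hS0def, mem_inter, mem_insert, mem_singleton]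
              constructor
              · rintro ⟨huE, h | h | h⟩
                · exact Or.inl h
                · exact absurd (h ▸ huE) hyE
                · exact Or.inr h
              · rintro (rfl | rfl)
                · exact ⟨hxE, Or.inl rfl⟩
                · exact ⟨hzE, Or.inr (Or.inr rfl)⟩
            obtain ⟨m, hm⟩ := card_eq_one.mp (petal_card1 h3 hE hxz htr)
            obtain ⟨v, hv⟩ := meet_petal hint hE hEy htry hyE
            rw [mem_inter] at hv
            intro u hu
            by_cases huS : u ∈ S0
            · exact mem_union_left _ huS
            · have hum : u = m := by
                have : u ∈ E \ S0 := mem_sdiff.mpr ⟨hu, huS⟩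
                rw [hm] at this; simpa using this
              have hvm : v = m := by
                have : v ∈ E \ S0 := mem_sdiff.mpr ⟨hv.1, (mem_sdiff.mp hv.2).2⟩
                rw [hm] at this; simpa using this
              have : u ∈ ey := by rw [hum, ← hvm]; exact hv.2
              exact mem_union_right _ (mem_union_left _ (mem_union_right _ this))
          · -- trace {x} : petal = ex
            have htr : E ∩ S0 = {x} :=
              mk_trace y z x ((triple_perm2 x y z).trans hS0def.symm) E hE hyE hzE
            have hpet : E \ S0 = ex := hP x E hE Ex hEx htr htrx
            intro u hu
            by_cases huS : u ∈ S0
            · exact mem_union_left _ huS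
            · have : u ∈ ex := hpet ▸ mem_sdiff.mpr ⟨hu, huS⟩
              exact mem_union_right _ (mem_union_left _ (mem_union_left _ this))
      · by_cases hyE : y ∈ E
        · by_cases hzE : z ∈ E
          · -- trace {y,z} : petal elt in ex
            have htr : E ∩ S0 = {y, z} := by
              ext u
              simp only [hS0def, mem_inter, mem_insert, mem_singleton]
              constructor
              · rintro ⟨huE, h | h | h⟩
                · exact absurd (h ▸ huE) hxE
                · exact Or.inl h
                · exact Or.inr h
              · rintro (rfl | rfl)
                · exact ⟨hyE, Or.inr (Or.inl rfl)⟩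
                · exact ⟨hzE, Or.inr (Or.inr rfl)⟩
            obtain ⟨m, hm⟩ := card_eq_one.mp (petal_card1 h3 hE hyz htr)
            obtain ⟨v, hv⟩ := meet_petal hint hE hEx htrx hxE
            rw [mem_inter] at hv
            intro u hu
            by_cases huS : u ∈ S0
            · exact mem_union_left _ huS
            · have hum : u = m := by
                have : u ∈ E \ S0 := mem_sdiff.mpr ⟨hu, huS⟩
                rw [hm] at this; simpa using this
              have hvm : v = m := by
                have : v ∈ E \ S0 := mem_sdiff.mpr ⟨hv.1, (mem_sdiff.mp hv.2).2⟩
                rw [hm] at this; simpa using this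
              have : u ∈ ex := by rw [hum, ← hvm]; exact hv.2
              exact mem_union_right _ (mem_union_left _ (mem_union_left _ this))
          · -- trace {y} : petal = ey
            have htr : E ∩ S0 = {y} :=
              mk_trace x z y ((triple_perm1 x y z).trans hS0def.symm) E hE hxE hzE
            have hpet : E \ S0 = ey := hP y E hE Ey hEy htr htry
            intro u hu
            by_cases huS : u ∈ S0
            · exact mem_union_left _ huS
            · have : u ∈ ey := hpet ▸ mem_sdiff.mpr ⟨hu, huS⟩
              exact mem_union_right _ (mem_union_left _ (mem_union_right _ this))
        · by_cases hzE : z ∈ E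
          · -- trace {z} : petal = ez
            have htr : E ∩ S0 = {z} := mk_trace x y z hS0def.symm E hE hxE hyE
            have hpet : E \ S0 = ez := hP z E hE Ez hEz htr htrz
            intro u hu
            by_cases huS : u ∈ S0
            · exact mem_union_left _ huS
            · have : u ∈ ez := hpet ▸ mem_sdiff.mpr ⟨hu, huS⟩
              exact mem_union_right _ (mem_union_right _ this)
          · exfalso
            obtain ⟨v', hv'⟩ := trace_nonempty E hE
            rw [mem_inter] at hv'
            have := hv'.2
            simp only [hS0def, mem_insert, mem_singleton] at this
            rcases this with rfl | rfl | rfl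
            · exact hxE hv'.1
            · exact hyE hv'.1
            · exact hzE hv'.1

section Counting

lemma deg_le_maxDeg (F : Finset (Finset ℕ)) (x : ℕ) :
    (F.filter fun E => x ∈ E).card ≤ maxDeg F := by
  rcases (F.filter fun E => x ∈ E).eq_empty_or_nonempty with h | h
  · simp [h]
  · obtain ⟨A, hA⟩ := h
    rw [mem_filter] at hA
    exact Finset.le_sup (f := fun x => (F.filter fun E => x ∈ E).card)
      (mem_biUnion.mpr ⟨A, hA.1, hA.2⟩)

lemma star_bound (F : Finset (Finset ℕ)) (n r : ℕ)
    (hF : F ⊆ (Finset.range n).powersetCard r) (S : Finset ℕ) :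
    (F.filter fun A => S ⊆ A).card ≤ Nat.choose (n - S.card) (r - S.card) := by
  rcases (F.filter fun A => S ⊆ A).eq_empty_or_nonempty with h | h
  · simp [h]
  · obtain ⟨A₀, hA₀⟩ := h
    rw [mem_filter] at hA₀
    have hA₀r := hF hA₀.1
    rw [Finset.mem_powersetCard] at hA₀r
    have hSr : S ⊆ Finset.range n := hA₀.2.trans hA₀r.1
    have hinj : ∀ A ∈ F.filter fun A => S ⊆ A, A \ S ∈
        (Finset.range n \ S).powersetCard (r - S.card) := by
      intro A hA
      rw [mem_filter] at hA
      have hAr := hF hA.1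
      rw [Finset.mem_powersetCard] at hAr
      rw [Finset.mem_powersetCard]
      constructor
      · exact sdiff_subset_sdiff hAr.1 Subset.rfl
      · rw [card_sdiff_of_subset hA.2, hAr.2]
    calc (F.filter fun A => S ⊆ A).card
        ≤ ((Finset.range n \ S).powersetCard (r - S.card)).card := by
          apply Finset.card_le_card_of_injOn (fun A => A \ S) hinj
          intro A hA B hB hAB
          rw [mem_coe, mem_filter] at hA hB
          have : A \ S ∪ S = B \ S ∪ S := by
            simp only at hAB
            rw [hAB]
          rwa [sdiff_union_of_subset hA.2, sdiff_union_of_subset hB.2] at this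
      _ = Nat.choose (n - S.card) (r - S.card) := by
          rw [Finset.card_powersetCard, card_sdiff_of_subset hSr, card_range]

lemma cover_bound (F : Finset (Finset ℕ)) (n r : ℕ)
    (hF : F ⊆ (Finset.range n).powersetCard r) (S T : Finset ℕ)
    (hd : ∀ A ∈ F.filter fun A => S ⊆ A, (A ∩ T).Nonempty)
    (hST : Disjoint S T) :
    (F.filter fun A => S ⊆ A).card ≤
      T.card * Nat.choose (n - (S.card + 1)) (r - (S.card + 1)) := by
  have hsub : (F.filter fun A => S ⊆ A) ⊆
      T.biUnion fun v => F.filter fun A => insert v S ⊆ A := by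
    intro A hA
    obtain ⟨v, hv⟩ := hd A hA
    rw [mem_inter] at hv
    rw [mem_filter] at hA
    exact mem_biUnion.mpr ⟨v, hv.2, mem_filter.mpr ⟨hA.1,
      insert_subset hv.1 hA.2⟩⟩
  calc (F.filter fun A => S ⊆ A).card
      ≤ (T.biUnion fun v => F.filter fun A => insert v S ⊆ A).card :=
        card_le_card hsub
    _ ≤ ∑ v ∈ T, (F.filter fun A => insert v S ⊆ A).card := card_biUnion_le
    _ ≤ ∑ _v ∈ T, Nat.choose (n - (S.card + 1)) (r - (S.card + 1)) := by
        apply Finset.sum_le_sum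
        intro v hv
        have hvS : v ∉ S := disjoint_right.mp hST hv
        have := star_bound F n r hF (insert v S)
        rwa [card_insert_of_notMem hvS] at this
    _ = T.card * Nat.choose (n - (S.card + 1)) (r - (S.card + 1)) := by
        rw [Finset.sum_const, smul_eq_mul]

lemma sum_inter_card (F : Finset (Finset ℕ)) (W : Finset ℕ) :
    ∑ A ∈ F, (A ∩ W).card = ∑ x ∈ W, (F.filter fun E => x ∈ E).card := by
  have h1 : ∀ A ∈ F, (A ∩ W).card = ∑ x ∈ W, if x ∈ A then 1 else 0 := by
    intro A _
    rw [inter_comm, ← Finset.filter_mem_eq_inter, Finset.card_filter]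
  rw [Finset.sum_congr rfl h1, Finset.sum_comm]
  apply Finset.sum_congr rfl
  intro x _
  rw [Finset.card_filter]

end Counting

section Branching

lemma BRstep (F : Finset (Finset ℕ)) (r : ℕ) (hr : 0 < r)
    (hcard : ∀ A ∈ F, A.card = r)
    (hint : ∀ A ∈ F, ∀ B ∈ F, (A ∩ B).Nonempty)
    (k : ℕ) (hk : k ≤ 2)
    (hnc : ∀ T : Finset ℕ, T.card ≤ 2 → ∃ A ∈ F, A ∩ T = ∅)
    (P : Finset (Finset ℕ)) (hP : ∀ p ∈ P, p.card = k)
    (hcov : ∀ A ∈ F, ∃ p ∈ P, p ⊆ A) :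
    ∃ Q : Finset (Finset ℕ), Q.card ≤ P.card * r ∧ (∀ q ∈ Q, q.card = k + 1) ∧
      ∀ A ∈ F, ∃ q ∈ Q, q ⊆ A := by
  classical
  have hw : ∀ p : Finset ℕ, p ∈ P → ∃ A ∈ F, A ∩ p = ∅ := by
    intro p hp
    exact hnc p (le_of_eq_of_le (hP p hp) hk)
  choose W hWF hWp using hw
  refine ⟨P.attach.biUnion fun p => (W p.1 p.2).image fun a => insert a p.1,
    ?_, ?_, ?_⟩
  · calc (P.attach.biUnion fun p => (W p.1 p.2).image fun a => insert a p.1).card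
        ≤ ∑ p ∈ P.attach, ((W p.1 p.2).image fun a => insert a p.1).card :=
          card_biUnion_le
      _ ≤ ∑ p ∈ P.attach, r := by
          apply Finset.sum_le_sum
          intro p _
          exact (card_image_le).trans (le_of_eq (hcard _ (hWF p.1 p.2)))
      _ = P.card * r := by rw [Finset.sum_const, card_attach, smul_eq_mul]
  · intro q hq
    rw [mem_biUnion] at hq
    obtain ⟨p, _, hq⟩ := hq
    rw [mem_image] at hq
    obtain ⟨a, ha, rfl⟩ := hq
    have hap : a ∉ p.1 := by
      intro hap
      have : a ∈ W p.1 p.2 ∩ p.1 := mem_inter.mpr ⟨ha, hap⟩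
      rw [hWp p.1 p.2] at this
      simp at this
    rw [card_insert_of_notMem hap, hP p.1 p.2]
  · intro A hA
    obtain ⟨p, hp, hpA⟩ := hcov A hA
    obtain ⟨a, ha⟩ := hint A hA (W p hp) (hWF p hp)
    rw [mem_inter] at ha
    refine ⟨insert a p, ?_, insert_subset ha.1 hpA⟩
    rw [mem_biUnion]
    exact ⟨⟨p, hp⟩, mem_attach _ _, mem_image.mpr ⟨a, ha.2, rfl⟩⟩

lemma BR3 (F : Finset (Finset ℕ)) (r : ℕ) (hr : 0 < r)
    (hcard : ∀ A ∈ F, A.card = r)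
    (hint : ∀ A ∈ F, ∀ B ∈ F, (A ∩ B).Nonempty)
    (hnc : ∀ T : Finset ℕ, T.card ≤ 2 → ∃ A ∈ F, A ∩ T = ∅) :
    ∃ Q : Finset (Finset ℕ), Q.card ≤ r ^ 3 ∧ (∀ q ∈ Q, q.card = 3) ∧
      ∀ A ∈ F, ∃ q ∈ Q, q ⊆ A := by
  obtain ⟨Q1, hQ1c, hQ1card, hQ1cov⟩ := BRstep F r hr hcard hint 0 (by omega) hnc
    {∅} (by simp) (by intro A _; exact ⟨∅, by simp⟩)
  obtain ⟨Q2, hQ2c, hQ2card, hQ2cov⟩ := BRstep F r hr hcard hint 1 (by omega) hnc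
    Q1 hQ1card hQ1cov
  obtain ⟨Q3, hQ3c, hQ3card, hQ3cov⟩ := BRstep F r hr hcard hint 2 (by omega) hnc
    Q2 hQ2card hQ2cov
  refine ⟨Q3, ?_, hQ3card, hQ3cov⟩
  have h1 : Q1.card ≤ r := by simpa using hQ1c
  have h2 : Q2.card ≤ r * r := le_trans hQ2c (Nat.mul_le_mul_right r h1)
  have h3 : Q3.card ≤ r * r * r := le_trans hQ3c (Nat.mul_le_mul_right r h2)
  calc Q3.card ≤ r * r * r := h3
    _ = r ^ 3 := by ring

end Branching

lemma nlarge (r n : ℕ) (hr : 4 ≤ r) (hn : 8 * r ^ 7 + 100 ≤ n) :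
    7 * r ^ 6 * Nat.choose (n - 4) (r - 4) ≤ Nat.choose (n - 3) (r - 3) := by
  have key := Nat.add_one_mul_choose_eq (n - 4) (r - 4)
  -- (n-4+1) * choose (n-4) (r-4) = choose (n-4+1) (r-4+1) * (r-4+1)
  have hn4 : n - 4 + 1 = n - 3 := by omega
  have hr4 : r - 4 + 1 = r - 3 := by omega
  rw [hn4, hr4] at key
  -- key : (n - 4 + 1) * choose (n-4) (r-4) = choose (n-3) (r-3) * (r - 3)
  have hrpos : 0 < r - 3 := by omega
  have h1 : 7 * r ^ 6 * (r - 3) ≤ n - 3 := by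
    have e1 : 7 * r ^ 6 * (r - 3) ≤ 7 * r ^ 6 * r := Nat.mul_le_mul_left _ (by omega)
    have e2 : 7 * r ^ 6 * r = 7 * r ^ 7 := by ring
    have e3 : (1:ℕ) ≤ r ^ 7 := Nat.one_le_pow _ _ (by omega)
    omega
  have main : 7 * r ^ 6 * Nat.choose (n - 4) (r - 4) * (r - 3) ≤
      Nat.choose (n - 3) (r - 3) * (r - 3) := by
    calc 7 * r ^ 6 * Nat.choose (n - 4) (r - 4) * (r - 3)
        = 7 * r ^ 6 * (r - 3) * Nat.choose (n - 4) (r - 4) := by ring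
      _ ≤ (n - 3) * Nat.choose (n - 4) (r - 4) := Nat.mul_le_mul_right _ h1
      _ = Nat.choose (n - 3) (r - 3) * (r - 3) := key
  exact Nat.le_of_mul_le_mul_right main hrpos

theorem main_count (n r : ℕ) (hr : 3 ≤ r) (hn : 8 * r ^ 7 + 100 ≤ n)
    (F : Finset (Finset ℕ)) (hF : F ⊆ (Finset.range n).powersetCard r)
    (hint : ∀ A ∈ F, ∀ B ∈ F, (A ∩ B).Nonempty)
    (hm : Nat.choose (n - 3) (r - 3) < F.card) :
    3 * F.card ≤ 7 * maxDeg F := by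
  classical
  have hcardA : ∀ A ∈ F, A.card = r := fun A hA =>
    (Finset.mem_powersetCard.mp (hF hA)).2
  by_cases hpair : ∃ T : Finset ℕ, T.card ≤ 2 ∧ ∀ A ∈ F, (A ∩ T).Nonempty
  · obtain ⟨T, hT2, hTcov⟩ := hpair
    have hsub : F ⊆ T.biUnion fun x => F.filter fun E => x ∈ E := by
      intro A hA
      obtain ⟨v, hv⟩ := hTcov A hA
      rw [mem_inter] at hv
      exact mem_biUnion.mpr ⟨v, hv.2, mem_filter.mpr ⟨hA, hv.1⟩⟩
    have h1 : F.card ≤ ∑ x ∈ T, (F.filter fun E => x ∈ E).card :=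
      (card_le_card hsub).trans card_biUnion_le
    have h2 : ∑ x ∈ T, (F.filter fun E => x ∈ E).card ≤ T.card * maxDeg F := by
      calc ∑ x ∈ T, (F.filter fun E => x ∈ E).card
          ≤ ∑ _x ∈ T, maxDeg F := Finset.sum_le_sum fun x _ => deg_le_maxDeg F x
        _ = T.card * maxDeg F := by rw [Finset.sum_const, smul_eq_mul]
    have h3 : F.card ≤ 2 * maxDeg F :=
      h1.trans (h2.trans (Nat.mul_le_mul_right _ hT2))
    omega
  · push_neg at hpair
    have hnc : ∀ T : Finset ℕ, T.card ≤ 2 → ∃ A ∈ F, A ∩ T = ∅ := by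
      intro T hT
      obtain ⟨A, hA, hAT⟩ := hpair T hT
      exact ⟨A, hA, hAT⟩
    by_cases hr3 : r = 3
    · subst hr3
      obtain ⟨W, hW7, hWsub⟩ := claim7 F hcardA hint hnc
      have h3m : 3 * F.card ≤ ∑ x ∈ W, (F.filter fun E => x ∈ E).card := by
        rw [← sum_inter_card]
        calc 3 * F.card = ∑ _A ∈ F, 3 := by
              rw [Finset.sum_const, smul_eq_mul, mul_comm]
          _ ≤ ∑ A ∈ F, (A ∩ W).card := by
              apply Finset.sum_le_sum
              intro A hA
              rw [inter_eq_left.mpr (hWsub A hA)]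
              exact le_of_eq (hcardA A hA).symm
      have h7 : ∑ x ∈ W, (F.filter fun E => x ∈ E).card ≤ 7 * maxDeg F := by
        calc ∑ x ∈ W, (F.filter fun E => x ∈ E).card
            ≤ ∑ _x ∈ W, maxDeg F := Finset.sum_le_sum fun x _ => deg_le_maxDeg F x
          _ = W.card * maxDeg F := by rw [Finset.sum_const, smul_eq_mul]
          _ ≤ 7 * maxDeg F := Nat.mul_le_mul_right _ hW7
      exact h3m.trans h7
    · have hr4 : 4 ≤ r := by omega
      obtain ⟨Q, hQc, hQ3, hQcov⟩ := BR3 F r (by omega) hcardA hint hnc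
      set φ := r ^ 3 * Nat.choose (n - 4) (r - 4) with hφ
      set H3 := Q.filter (fun S => φ < (F.filter fun A => S ⊆ A).card) with hH3
      have hrcube : r * Nat.choose (n - 4) (r - 4) ≤ φ := by
        rw [hφ]
        apply Nat.mul_le_mul_right
        calc r = r ^ 1 := (pow_one r).symm
          _ ≤ r ^ 3 := Nat.pow_le_pow_right (by omega) (by omega)
      have h3cube : 3 * Nat.choose (n - 4) (r - 4) ≤ φ := by
        rw [hφ]
        apply Nat.mul_le_mul_right
        calc (3:ℕ) ≤ r := hr
          _ = r ^ 1 := (pow_one r).symm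
          _ ≤ r ^ 3 := Nat.pow_le_pow_right (by omega) (by omega)
      have f2 : ∀ S ∈ H3, ∀ A ∈ F, (A ∩ S).Nonempty := by
        intro S hS A hA
        rw [hH3, mem_filter] at hS
        by_contra hAS
        have hAS' : A ∩ S = ∅ := not_nonempty_iff_eq_empty.mp hAS
        have hdisj : Disjoint S A :=
          (Finset.disjoint_iff_inter_eq_empty.mpr hAS').symm
        have hcb := cover_bound F n r hF S A
          (fun B hB => hint B (mem_filter.mp hB).1 A hA) hdisj
        rw [hQ3 S hS.1, hcardA A hA] at hcb
        norm_num at hcb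
        omega
      have f3 : ∀ S ∈ H3, ∀ S' ∈ H3, (S ∩ S').Nonempty := by
        intro S hS S' hS'
        by_contra hSS
        have hSS' : S ∩ S' = ∅ := not_nonempty_iff_eq_empty.mp hSS
        have hdisj : Disjoint S S' := Finset.disjoint_iff_inter_eq_empty.mpr hSS'
        have hf2 := f2 S' hS'
        rw [hH3, mem_filter] at hS hS'
        have hcb := cover_bound F n r hF S S'
          (fun B hB => hf2 B (mem_filter.mp hB).1) hdisj
        rw [hQ3 S hS.1, hQ3 S' hS'.1] at hcb
        norm_num at hcb
        omega
      by_cases hH3cov : ∃ T : Finset ℕ, T.card ≤ 2 ∧ ∀ S ∈ H3, (S ∩ T).Nonempty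
      · obtain ⟨T, hT2, hTcov⟩ := hH3cov
        set L := Q.filter (fun S => ¬ φ < (F.filter fun A => S ⊆ A).card) with hL
        have hsub : F ⊆ (T.biUnion fun x => F.filter fun E => x ∈ E) ∪
            (L.biUnion fun S => F.filter fun A => S ⊆ A) := by
          intro A hA
          obtain ⟨S, hSQ, hSA⟩ := hQcov A hA
          by_cases hheavy : φ < (F.filter fun A => S ⊆ A).card
          · have hSH3 : S ∈ H3 := by rw [hH3]; exact mem_filter.mpr ⟨hSQ, hheavy⟩
            obtain ⟨v, hv⟩ := hTcov S hSH3
            rw [mem_inter] at hv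
            exact mem_union_left _
              (mem_biUnion.mpr ⟨v, hv.2, mem_filter.mpr ⟨hA, hSA hv.1⟩⟩)
          · exact mem_union_right _ (mem_biUnion.mpr
              ⟨S, by rw [hL]; exact mem_filter.mpr ⟨hSQ, hheavy⟩,
                mem_filter.mpr ⟨hA, hSA⟩⟩)
        have h1 : F.card ≤ 2 * maxDeg F + r ^ 3 * φ := by
          have c1 : (T.biUnion fun x => F.filter fun E => x ∈ E).card ≤
              2 * maxDeg F := by
            calc (T.biUnion fun x => F.filter fun E => x ∈ E).card
                ≤ ∑ x ∈ T, (F.filter fun E => x ∈ E).card := card_biUnion_le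
              _ ≤ ∑ _x ∈ T, maxDeg F :=
                  Finset.sum_le_sum fun x _ => deg_le_maxDeg F x
              _ = T.card * maxDeg F := by rw [Finset.sum_const, smul_eq_mul]
              _ ≤ 2 * maxDeg F := Nat.mul_le_mul_right _ hT2
          have c2 : (L.biUnion fun S => F.filter fun A => S ⊆ A).card ≤
              r ^ 3 * φ := by
            calc (L.biUnion fun S => F.filter fun A => S ⊆ A).card
                ≤ ∑ S ∈ L, (F.filter fun A => S ⊆ A).card := card_biUnion_le
              _ ≤ ∑ _S ∈ L, φ := by
                  apply Finset.sum_le_sum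
                  intro S hS
                  rw [hL, mem_filter] at hS
                  omega
              _ = L.card * φ := by rw [Finset.sum_const, smul_eq_mul]
              _ ≤ r ^ 3 * φ := by
                  apply Nat.mul_le_mul_right
                  calc L.card ≤ Q.card := card_le_card (filter_subset _ _)
                    _ ≤ r ^ 3 := hQc
          calc F.card ≤ ((T.biUnion fun x => F.filter fun E => x ∈ E) ∪
              (L.biUnion fun S => F.filter fun A => S ⊆ A)).card := card_le_card hsub
            _ ≤ _ + _ := card_union_le _ _
            _ ≤ 2 * maxDeg F + r ^ 3 * φ := Nat.add_le_add c1 c2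
        have h2 : 7 * (r ^ 3 * φ) ≤ F.card := by
          have e1 : 7 * (r ^ 3 * φ) = 7 * r ^ 6 * Nat.choose (n - 4) (r - 4) := by
            rw [hφ]; ring
          rw [e1]
          exact (nlarge r n hr4 hn).trans (le_of_lt hm)
        omega
      · push_neg at hH3cov
        have hncH3 : ∀ T : Finset ℕ, T.card ≤ 2 → ∃ S ∈ H3, S ∩ T = ∅ := by
          intro T hT
          obtain ⟨S, hS, h⟩ := hH3cov T hT
          exact ⟨S, hS, h⟩
        obtain ⟨W, hW7, hWsub⟩ := claim7 H3
          (fun S hS => hQ3 S (mem_filter.mp (hH3 ▸ hS)).1) f3 hncH3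
        have hA3 : ∀ A ∈ F, 3 ≤ (A ∩ W).card := by
          intro A hA
          by_contra hlt
          push_neg at hlt
          obtain ⟨S, hS, hSd⟩ := hncH3 (A ∩ W) (by omega)
          obtain ⟨v, hv⟩ := f2 S hS A hA
          rw [mem_inter] at hv
          have hvW : v ∈ W := hWsub S hS hv.2
          have : v ∈ S ∩ (A ∩ W) :=
            mem_inter.mpr ⟨hv.2, mem_inter.mpr ⟨hv.1, hvW⟩⟩
          rw [hSd] at this
          simp at this
        calc 3 * F.card = ∑ _A ∈ F, 3 := by
              rw [Finset.sum_const, smul_eq_mul, mul_comm]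
          _ ≤ ∑ A ∈ F, (A ∩ W).card := Finset.sum_le_sum hA3
          _ = ∑ x ∈ W, (F.filter fun E => x ∈ E).card := sum_inter_card F W
          _ ≤ ∑ _x ∈ W, maxDeg F :=
              Finset.sum_le_sum fun x _ => deg_le_maxDeg F x
          _ = W.card * maxDeg F := by rw [Finset.sum_const, smul_eq_mul]
          _ ≤ 7 * maxDeg F := Nat.mul_le_mul_right _ hW7

theorem stmt19 (r : ℕ) (hr : 3 ≤ r) :
    (∀ C : ℝ, 2 ≤ C → C < 7 / 3 → ∃ N : ℕ, ∀ n ≥ N,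
      ∀ F ⊆ (Finset.range n).powersetCard r, FamIntersecting F →
        (Nat.choose (n - 3) (r - 3) : ℝ) < F.card →
        (3 * C - 6) / C ≤ (maxDeg F : ℝ) / F.card) ∧
    (∃ N : ℕ, ∀ n ≥ N, ∀ F ⊆ (Finset.range n).powersetCard r, FamIntersecting F →
        (Nat.choose (n - 3) (r - 3) : ℝ) < F.card →
        (3 / 7 : ℝ) * F.card ≤ maxDeg F) := by
  have main : ∀ n, 8 * r ^ 7 + 100 ≤ n → ∀ F ⊆ (Finset.range n).powersetCard r,
      FamIntersecting F → (Nat.choose (n - 3) (r - 3) : ℝ) < F.card →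
      3 * (F.card : ℝ) ≤ 7 * (maxDeg F : ℝ) ∧ (0 : ℝ) < F.card := by
    intro n hn F hF hfi hm
    have hmnat : Nat.choose (n - 3) (r - 3) < F.card := by exact_mod_cast hm
    have h := main_count n r hr hn F hF hfi hmnat
    constructor
    · exact_mod_cast h
    · have hpos : 0 < F.card := by omega
      exact_mod_cast hpos
  constructor
  · intro C hC2 hC73
    refine ⟨8 * r ^ 7 + 100, fun n hn F hF hfi hm => ?_⟩
    obtain ⟨h37, hpos⟩ := main n hn F hF hfi hm
    have hC0 : (0 : ℝ) < C := by linarith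
    have step1 : (3 * C - 6) / C ≤ 3 / 7 := by
      rw [div_le_div_iff₀ hC0 (by norm_num)]
      linarith
    have step2 : (3 : ℝ) / 7 ≤ (maxDeg F : ℝ) / F.card := by
      rw [div_le_div_iff₀ (by norm_num) hpos]
      linarith
    linarith
  · refine ⟨8 * r ^ 7 + 100, fun n hn F hF hfi hm => ?_⟩
    obtain ⟨h37, hpos⟩ := main n hn F hF hfi hm
    linarith
end
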